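/- arXiv:1801.00550 — 3 statements merged into one kernel-verified Lean document; each statement's English description precedes it below -/
import Mathlib

section
/- Let k be an algebraically closed field complete with respect to a non-trivial non-Archimedean absolute value, and let f ∈ k{T} be a nonzero element of the Tate algebra (convergent power series on the closed unit disk). Then f factors as f = c · ∏_{j=1}^n (T - a_j) · u, where c ∈ k, the a_j lie in the closed unit disk (|a_j| ≤ 1), and u ∈ k{T} is a unit with |u(x)| = 1 for every point x of the closed unit disk (equivalently, u has Gauss norm 1 and all its coefficients of positive degree have absolute value strictly less than 1). -/
/-!
Weierstrass preparation for the one-variable Tate algebra `k{T}` over an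
algebraically closed field `k`, complete with respect to a non-trivial
non-Archimedean absolute value.
-/

/-- The Tate algebra `k{T}`: power series `∑ cₙ Tⁿ` whose coefficients tend to `0`,
i.e. convergent power series on the closed unit disk. -/
structure TateSeries (k : Type*) [NontriviallyNormedField k] where
  coeff : ℕ → k
  tendsto_zero : Filter.Tendsto (fun n => ‖coeff n‖) Filter.atTop (nhds 0)

/-- Evaluation of a Tate series at a point of the closed unit disk. -/
noncomputable def TateSeries.eval {k : Type*} [NontriviallyNormedField k]
    (f : TateSeries k) (x : k) : k :=
  ∑' n : ℕ, f.coeff n * x ^ n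

/-- The Gauss norm of a Tate series. -/
noncomputable def TateSeries.gaussNorm {k : Type*} [NontriviallyNormedField k]
    (f : TateSeries k) : ℝ :=
  ⨆ n : ℕ, ‖f.coeff n‖

set_option linter.unusedSectionVars false
set_option linter.unnecessarySimpa false

open Filter IsUltrametricDist Polynomial

section WSAux

variable {k : Type*} [NontriviallyNormedField k] [IsUltrametricDist k] [CompleteSpace k]
  [IsAlgClosed k]

section Helpers

lemma ws_summable {g : ℕ → k} (h : Tendsto (fun n => ‖g n‖) atTop (nhds 0)) :
    Summable g := by
  apply NonarchimedeanAddGroup.summable_of_tendsto_cofinite_zero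
  rw [Nat.cofinite_eq_atTop]
  exact tendsto_zero_iff_norm_tendsto_zero.mpr h

lemma ws_iso {a b : k} (h : ‖b‖ < ‖a‖) : ‖a + b‖ = ‖a‖ := by
  rw [norm_add_eq_max_of_norm_ne_norm (by linarith : ‖a‖ ≠ ‖b‖)]
  exact max_eq_left h.le

lemma ws_iso_sub {a b : k} (h : ‖b‖ < ‖a‖) : ‖a - b‖ = ‖a‖ := by
  rw [sub_eq_add_neg]; exact ws_iso (by rwa [norm_neg])

lemma ws_sub_le_max (a b : k) : ‖a - b‖ ≤ max ‖a‖ ‖b‖ := by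
  rw [sub_eq_add_neg]
  simpa using norm_add_le_max a (-b)

/-- terms of a Tate series at a point of the disk are summable -/
lemma ws_summable_terms {c : ℕ → k} (hc : Tendsto (fun n => ‖c n‖) atTop (nhds 0))
    {x : k} (hx : ‖x‖ ≤ 1) : Summable (fun n => c n * x ^ n) := by
  apply ws_summable
  apply squeeze_zero (fun n => norm_nonneg _) (g := fun n => ‖c n‖) _ hc
  intro n
  calc ‖c n * x ^ n‖ = ‖c n‖ * ‖x ^ n‖ := norm_mul _ _
    _ ≤ ‖c n‖ * 1 := by
        have := pow_le_one₀ (norm_nonneg x) hx (n := n)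
        have h1 : ‖x ^ n‖ ≤ 1 := by rw [norm_pow]; exact this
        exact mul_le_mul_of_nonneg_left h1 (norm_nonneg _)
    _ = ‖c n‖ := mul_one _

/-- a nonnegative sequence tending to 0, all values < B, is bounded by some ε < B -/
lemma ws_sup_lt {g : ℕ → ℝ} (hg : Tendsto g atTop (nhds 0)) (h0 : ∀ n, 0 ≤ g n)
    {B : ℝ} (hB : 0 < B) (h1 : ∀ n, g n < B) :
    ∃ ε, 0 ≤ ε ∧ ε < B ∧ ∀ n, g n ≤ ε := by
  obtain ⟨M, hM⟩ := (Metric.tendsto_atTop.mp hg (B/2) (by linarith))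
  have hM' : ∀ n, M ≤ n → g n ≤ B/2 := by
    intro n hn
    have := hM n hn
    rw [Real.dist_eq, sub_zero, abs_of_nonneg (h0 n)] at this
    linarith
  have key : ∀ m, ∃ ε, 0 ≤ ε ∧ ε < B ∧ ∀ n < m, g n ≤ ε := by
    intro m
    induction m with
    | zero => exact ⟨B/2, by linarith, by linarith, fun n hn => absurd hn (Nat.not_lt_zero n)⟩
    | succ m ih =>
      obtain ⟨ε, hε0, hεB, hε⟩ := ih
      refine ⟨max ε (g m), le_trans hε0 (le_max_left _ _), max_lt hεB (h1 m), ?_⟩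
      intro n hn
      rcases Nat.lt_succ_iff_lt_or_eq.mp hn with h | h
      · exact le_trans (hε n h) (le_max_left _ _)
      · subst h; exact le_max_right _ _
  obtain ⟨ε, hε0, hεB, hε⟩ := key M
  refine ⟨max ε (B/2), le_trans hε0 (le_max_left _ _), max_lt hεB (by linarith), ?_⟩
  intro n
  rcases lt_or_ge n M with h | h
  · exact le_trans (hε n h) (le_max_left _ _)
  · exact le_trans (hM' n h) (le_max_right _ _)

/-- existence of the largest dominant index -/
lemma ws_dominant {c : ℕ → k} (hc : Tendsto (fun n => ‖c n‖) atTop (nhds 0))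
    (hne : ∃ n, c n ≠ 0) :
    ∃ N, 0 < ‖c N‖ ∧ (∀ n, ‖c n‖ ≤ ‖c N‖) ∧ (∀ n, N < n → ‖c n‖ < ‖c N‖) := by
  obtain ⟨n₀, hn₀⟩ := hne
  have hpos : 0 < ‖c n₀‖ := norm_pos_iff.mpr hn₀
  obtain ⟨M₀, hM₀⟩ := (Metric.tendsto_atTop.mp hc (‖c n₀‖) hpos)
  have hM₀' : ∀ n, M₀ ≤ n → ‖c n‖ < ‖c n₀‖ := by
    intro n hn
    have := hM₀ n hn
    rwa [Real.dist_eq, sub_zero, abs_of_nonneg (norm_nonneg _)] at this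
  set M := max M₀ (n₀ + 1) with hM
  have hn₀M : n₀ ∈ Finset.range M := by
    exact Finset.mem_range.mpr (lt_of_lt_of_le (Nat.lt_succ_self n₀) (le_max_right _ _))
  -- the finite set of indices < M attaining the max norm
  obtain ⟨N₁, hN₁mem, hN₁⟩ := Finset.exists_max_image (Finset.range M) (fun n => ‖c n‖)
    ⟨n₀, hn₀M⟩
  set S := ‖c N₁‖ with hS
  have hSpos : 0 < S := lt_of_lt_of_le hpos (hN₁ n₀ hn₀M)
  have hbig : ∀ n, M ≤ n → ‖c n‖ < S := by
    intro n hn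
    exact lt_of_lt_of_le (hM₀' n (le_trans (le_max_left _ _) hn)) (hN₁ n₀ hn₀M)
  have hall : ∀ n, ‖c n‖ ≤ S := by
    intro n
    rcases lt_or_ge n M with h | h
    · exact hN₁ n (Finset.mem_range.mpr h)
    · exact (hbig n h).le
  -- take the largest index < M attaining S
  classical
  set T := (Finset.range M).filter (fun n => ‖c n‖ = S) with hT
  have hTne : T.Nonempty := ⟨N₁, by simp [hT, Finset.mem_filter]; exact ⟨Finset.mem_range.mp hN₁mem, rfl⟩⟩
  set N := T.max' hTne with hN2
  have hNmem : N ∈ T := T.max'_mem hTne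
  have hNS : ‖c N‖ = S := (Finset.mem_filter.mp hNmem).2
  refine ⟨N, by rw [hNS]; exact hSpos, fun n => by rw [hNS]; exact hall n, ?_⟩
  intro n hn
  rw [hNS]
  rcases lt_or_ge n M with h | h
  · rcases lt_or_eq_of_le (hall n) with h' | h'
    · exact h'
    · exfalso
      have : n ∈ T := Finset.mem_filter.mpr ⟨Finset.mem_range.mpr h, h'⟩
      exact absurd (Finset.le_max' T n this) (not_le.mpr hn)
  · exact hbig n h

end Helpers

open Polynomial

section MultisetHelpers

lemma ms_norm_prod (M : Multiset k) : ‖M.prod‖ = (M.map fun x => ‖x‖).prod := by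
  induction M using Multiset.induction_on with
  | empty => simp
  | cons a s ih => simp [norm_mul, ih]

lemma ms_exists_min {α : Type*} (M : Multiset α) (h : M ≠ 0) (φ : α → ℝ) :
    ∃ r ∈ M, ∀ r' ∈ M, φ r ≤ φ r' := by
  induction M using Multiset.induction_on with
  | empty => exact absurd rfl h
  | cons a s ih =>
    rcases eq_or_ne s 0 with rfl | hs
    · exact ⟨a, by simp, by simp⟩
    · obtain ⟨r, hr, hmin⟩ := ih hs
      rcases le_total (φ a) (φ r) with h' | h'
      · refine ⟨a, by simp, ?_⟩
        intro r' hr'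
        rcases Multiset.mem_cons.mp hr' with rfl | hr'
        · exact le_rfl
        · exact le_trans h' (hmin r' hr')
      · refine ⟨r, Multiset.mem_cons_of_mem hr, ?_⟩
        intro r' hr'
        rcases Multiset.mem_cons.mp hr' with rfl | hr'
        · exact h'
        · exact hmin r' hr'

lemma ms_pow_card_le_prod (M : Multiset ℝ) (b : ℝ) (hb : 0 ≤ b)
    (h : ∀ x ∈ M, b ≤ x) : b ^ Multiset.card M ≤ M.prod := by
  induction M using Multiset.induction_on with
  | empty => simp
  | cons a s ih =>
    simp only [Multiset.card_cons, Multiset.prod_cons, pow_succ]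
    rw [mul_comm (b ^ Multiset.card s) b]
    apply mul_le_mul (h a (Multiset.mem_cons_self a s)) (ih fun x hx => h x (Multiset.mem_cons_of_mem hx)) (pow_nonneg hb _) _
    exact le_trans hb (h a (Multiset.mem_cons_self a s))

lemma ms_prod_nonneg (M : Multiset ℝ) (h : ∀ x ∈ M, 0 ≤ x) : 0 ≤ M.prod := by
  induction M using Multiset.induction_on with
  | empty => simp
  | cons a s ih =>
    simp only [Multiset.prod_cons]
    exact mul_nonneg (h a (Multiset.mem_cons_self a s))
      (ih fun x hx => h x (Multiset.mem_cons_of_mem hx))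

end MultisetHelpers

section Dom

/-- dominance data for a polynomial: `S` is the sup norm of the coefficients,
attained at `N` and at no larger index. -/
def WsDom (P : Polynomial k) (S : ℝ) (N : ℕ) : Prop :=
  ‖P.coeff N‖ = S ∧ 0 < S ∧ (∀ n, ‖P.coeff n‖ ≤ S) ∧ (∀ n, N < n → ‖P.coeff n‖ < S)

lemma wsDom_C {c : k} (hc : c ≠ 0) : WsDom (C c) ‖c‖ 0 := by
  refine ⟨by simp, norm_pos_iff.mpr hc, ?_, ?_⟩
  · intro n
    rcases Nat.eq_zero_or_pos n with rfl | hn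
    · simp
    · rw [coeff_C, if_neg (by omega)]; simp [norm_nonneg]
  · intro n hn
    rw [coeff_C, if_neg (by omega)]
    simpa using norm_pos_iff.mpr hc

lemma ws_coeff_linear_mul (r : k) (P : Polynomial k) :
    (((X : Polynomial k) - C r) * P).coeff 0 = -(r * P.coeff 0) ∧
    ∀ n, (((X : Polynomial k) - C r) * P).coeff (n + 1) = P.coeff n - r * P.coeff (n + 1) := by
  constructor
  · rw [sub_mul, coeff_sub, mul_coeff_zero, coeff_X_zero, zero_mul, coeff_C_mul]
    ring
  · intro n
    rw [sub_mul, coeff_sub, coeff_X_mul, coeff_C_mul]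

lemma wsDom_linear_mul {P : Polynomial k} {S : ℝ} {N : ℕ} (h : WsDom P S N) (r : k) :
    WsDom ((X - C r) * P) (max 1 ‖r‖ * S) (if ‖r‖ ≤ 1 then N + 1 else N) := by
  obtain ⟨hcoe, hpos, hle, hlt⟩ := h
  obtain ⟨h0, hsucc⟩ := ws_coeff_linear_mul r P
  by_cases hr : ‖r‖ ≤ 1
  · rw [if_pos hr, max_eq_left hr, one_mul]
    refine ⟨?_, hpos, ?_, ?_⟩
    · rw [hsucc N]
      rw [← hcoe]
      apply ws_iso_sub
      calc ‖r * P.coeff (N+1)‖ = ‖r‖ * ‖P.coeff (N+1)‖ := norm_mul _ _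
        _ ≤ 1 * ‖P.coeff (N+1)‖ := mul_le_mul_of_nonneg_right hr (norm_nonneg _)
        _ = ‖P.coeff (N+1)‖ := one_mul _
        _ < S := hlt _ (Nat.lt_succ_self N)
        _ = ‖P.coeff N‖ := hcoe.symm
    · intro n
      rcases Nat.eq_zero_or_pos n with rfl | hn
      · rw [h0, norm_neg, norm_mul]
        calc ‖r‖ * ‖P.coeff 0‖ ≤ 1 * S :=
          mul_le_mul hr (hle 0) (norm_nonneg _) zero_le_one
        _ = S := one_mul _
      · obtain ⟨m, rfl⟩ : ∃ m, n = m + 1 := ⟨n - 1, by omega⟩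
        rw [hsucc m]
        refine le_trans (ws_sub_le_max _ _) (max_le (hle m) ?_)
        rw [norm_mul]
        calc ‖r‖ * ‖P.coeff (m+1)‖ ≤ 1 * S :=
          mul_le_mul hr (hle _) (norm_nonneg _) zero_le_one
        _ = S := one_mul _
    · intro n hn
      obtain ⟨m, rfl⟩ : ∃ m, n = m + 1 := ⟨n - 1, by omega⟩
      rw [hsucc m]
      refine lt_of_le_of_lt (ws_sub_le_max _ _) (max_lt (hlt m (by omega)) ?_)
      rw [norm_mul]
      calc ‖r‖ * ‖P.coeff (m+1)‖ ≤ 1 * ‖P.coeff (m+1)‖ :=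
        mul_le_mul_of_nonneg_right hr (norm_nonneg _)
      _ = ‖P.coeff (m+1)‖ := one_mul _
      _ < S := hlt _ (by omega)
  · push_neg at hr
    rw [if_neg (not_le.mpr hr), max_eq_right hr.le]
    have hrS : S < ‖r‖ * S := by nlinarith
    refine ⟨?_, by positivity, ?_, ?_⟩
    · rcases Nat.eq_zero_or_pos N with rfl | hN
      · rw [h0, norm_neg, norm_mul, hcoe]
      · obtain ⟨m, rfl⟩ : ∃ m, N = m + 1 := ⟨N - 1, by omega⟩
        rw [hsucc m, sub_eq_add_neg, add_comm]
        rw [ws_iso (a := -(r * P.coeff (m+1))) ?h1]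
        · rw [norm_neg, norm_mul, hcoe]
        case h1 =>
          rw [norm_neg, norm_mul, hcoe]
          exact lt_of_le_of_lt (hle m) hrS
    · intro n
      rcases Nat.eq_zero_or_pos n with rfl | hn
      · rw [h0, norm_neg, norm_mul]
        exact mul_le_mul_of_nonneg_left (hle 0) (norm_nonneg _)
      · obtain ⟨m, rfl⟩ : ∃ m, n = m + 1 := ⟨n - 1, by omega⟩
        rw [hsucc m]
        refine le_trans (ws_sub_le_max _ _) (max_le (le_trans (hle m) hrS.le) ?_)
        rw [norm_mul]
        exact mul_le_mul_of_nonneg_left (hle _) (norm_nonneg _)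
    · intro n hn
      obtain ⟨m, rfl⟩ : ∃ m, n = m + 1 := ⟨n - 1, by omega⟩
      rw [hsucc m]
      refine lt_of_le_of_lt (ws_sub_le_max _ _) (max_lt (lt_of_le_of_lt (hle m) hrS) ?_)
      rw [norm_mul]
      have : ‖P.coeff (m+1)‖ < S := hlt _ (by omega)
      have h0r : (0:ℝ) < ‖r‖ := by linarith
      exact mul_lt_mul_of_pos_left this h0r

lemma wsDom_unique {P : Polynomial k} {S S' : ℝ} {N N' : ℕ}
    (h : WsDom P S N) (h' : WsDom P S' N') : S = S' ∧ N = N' := by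
  obtain ⟨hcoe, hpos, hle, hlt⟩ := h
  obtain ⟨hcoe', hpos', hle', hlt'⟩ := h'
  have hS : S = S' := le_antisymm (hcoe ▸ hle' N) (hcoe' ▸ hle N')
  refine ⟨hS, ?_⟩
  by_contra hNN
  rcases Nat.lt_or_ge N N' with h | h
  · have := hlt N' h
    rw [hcoe', ← hS] at this
    exact absurd this (lt_irrefl _)
  · have hNN' : N' < N := by omega
    have := hlt' N hNN'
    rw [hcoe, hS] at this
    exact absurd this (lt_irrefl _)

lemma wsDom_prod (R : Multiset k) (c : k) (hc : c ≠ 0) :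
    WsDom (C c * (R.map fun r => (X : Polynomial k) - C r).prod)
      (‖c‖ * (R.map fun r => max 1 ‖r‖).prod)
      (Multiset.card (R.filter fun r => ‖r‖ ≤ 1)) := by
  induction R using Multiset.induction_on with
  | empty => simpa using wsDom_C hc
  | cons a s ih =>
    have hrw : (C c * ((a ::ₘ s).map fun r => (X : Polynomial k) - C r).prod)
        = (X - C a) * (C c * (s.map fun r => (X : Polynomial k) - C r).prod) := by
      rw [Multiset.map_cons, Multiset.prod_cons]; ring
    rw [hrw]
    have := wsDom_linear_mul ih a
    rw [Multiset.map_cons, Multiset.prod_cons, Multiset.filter_cons]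
    by_cases ha : ‖a‖ ≤ 1
    · rw [if_pos ha] at this ⊢
      simpa [mul_assoc, mul_comm, mul_left_comm] using this
    · rw [if_neg ha] at this ⊢
      simpa [mul_assoc, mul_comm, mul_left_comm] using this
end Dom

/-- Key polynomial lemma: a polynomial with dominance data `(S, N)` has, for every point `a`
of the closed unit disk, a root `r` in the closed unit disk with `‖a - r‖ ^ N ≤ ‖P(a)‖ / S`. -/
lemma ws_poly_key {P : Polynomial k} {S : ℝ} {N : ℕ} (hdom : WsDom P S N) (hN : 1 ≤ N)
    {a : k} (ha : ‖a‖ ≤ 1) :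
    ∃ r : k, ‖r‖ ≤ 1 ∧ P.eval r = 0 ∧ ‖a - r‖ ^ N ≤ ‖P.eval a‖ / S := by
  classical
  have hP : P ≠ 0 := by
    intro h
    obtain ⟨hcoe, hpos, -, -⟩ := hdom
    rw [h] at hcoe; simp at hcoe; rw [← hcoe] at hpos; exact lt_irrefl _ hpos
  have hsplits : P.Splits := IsAlgClosed.splits P
  have hfac : P = C P.leadingCoeff * (P.roots.map fun r => X - C r).prod :=
    hsplits.eq_prod_roots
  have hlc : P.leadingCoeff ≠ 0 := leadingCoeff_ne_zero.mpr hP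
  set R := P.roots with hR
  have hdom2 := wsDom_prod R P.leadingCoeff hlc
  rw [← hfac] at hdom2
  obtain ⟨hS, hNcard⟩ := wsDom_unique hdom hdom2
  set Rin := R.filter (fun r => ‖r‖ ≤ 1) with hRin
  set Rout := R.filter (fun r => ¬ ‖r‖ ≤ 1) with hRout
  have hsplit : Rin + Rout = R := Multiset.filter_add_not _ _
  have hSpos : 0 < S := hdom.2.1
  -- compute ‖P.eval a‖
  have heval : P.eval a = P.leadingCoeff * (R.map fun r => (a - r)).prod := by
    conv_lhs => rw [hfac]
    rw [eval_mul, eval_C, eval_multiset_prod, Multiset.map_map]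
    simp [Function.comp_def]
  have hnormeval : ‖P.eval a‖ = ‖P.leadingCoeff‖ * ((R.map fun r => ‖a - r‖).prod) := by
    rw [heval, norm_mul, ms_norm_prod, Multiset.map_map]
    rfl
  -- the outside part
  have hout_eq : ∀ r ∈ Rout, ‖a - r‖ = ‖r‖ := by
    intro r hr
    have : ¬ ‖r‖ ≤ 1 := (Multiset.mem_filter.mp hr).2
    push_neg at this
    rw [← norm_neg (a - r)]
    simp only [neg_sub]
    exact ws_iso_sub (lt_of_le_of_lt ha this)
  -- S = ‖lc‖ * ∏_{out} ‖r‖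
  have hSsplit : S = ‖P.leadingCoeff‖ * ((Rout.map fun r => ‖r‖).prod) := by
    rw [hS]
    congr 1
    rw [← hsplit, Multiset.map_add, Multiset.prod_add]
    have h1 : (Rin.map fun r => max 1 ‖r‖).prod = 1 := by
      rw [Multiset.map_congr rfl (fun r hr => ?_), Multiset.map_const', Multiset.prod_replicate,
        one_pow]
      exact max_eq_left ((Multiset.mem_filter.mp hr).2)
    have h2 : (Rout.map fun r => max 1 ‖r‖).prod = (Rout.map fun r => ‖r‖).prod := by
      apply congrArg
      apply Multiset.map_congr rfl
      intro r hr
      have : ¬ ‖r‖ ≤ 1 := (Multiset.mem_filter.mp hr).2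
      push_neg at this
      exact max_eq_right this.le
    rw [h1, h2, one_mul]
  have hmain : ‖P.eval a‖ = S * (Rin.map fun r => ‖a - r‖).prod := by
    rw [hnormeval, ← hsplit, Multiset.map_add, Multiset.prod_add, hSsplit]
    have : (Rout.map fun r => ‖a - r‖).prod = (Rout.map fun r => ‖r‖).prod := by
      apply congrArg
      exact Multiset.map_congr rfl hout_eq
    rw [this]
    ring
  -- Rin is nonempty
  have hcard : Multiset.card Rin = N := hNcard.symm
  have hRinne : Rin ≠ 0 := by
    intro h
    rw [h] at hcard
    simp at hcard
    omega
  obtain ⟨r₀, hr₀mem, hr₀min⟩ := ms_exists_min Rin hRinne (fun r => ‖a - r‖)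
  have hr₀in : r₀ ∈ R := Multiset.mem_of_mem_filter hr₀mem
  have hr₀1 : ‖r₀‖ ≤ 1 := (Multiset.mem_filter.mp hr₀mem).2
  have hr₀root : P.eval r₀ = 0 := by
    have := (Polynomial.mem_roots hP).mp (hR ▸ hr₀in)
    exact this
  refine ⟨r₀, hr₀1, hr₀root, ?_⟩
  have hpow : ‖a - r₀‖ ^ N ≤ (Rin.map fun r => ‖a - r‖).prod := by
    rw [← hcard]
    have := ms_pow_card_le_prod (Rin.map fun r => ‖a - r‖) (‖a - r₀‖) (norm_nonneg _) ?_
    · rwa [Multiset.card_map] at this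
    · intro x hx
      obtain ⟨r, hr, rfl⟩ := Multiset.mem_map.mp hx
      exact hr₀min r hr
  rw [le_div_iff₀ hSpos]
  calc ‖a - r₀‖ ^ N * S ≤ (Rin.map fun r => ‖a - r‖).prod * S := by
        exact mul_le_mul_of_nonneg_right hpow hSpos.le
    _ = ‖P.eval a‖ := by rw [hmain]; ring

lemma ws_term_norm_le {c x : k} (hx : ‖x‖ ≤ 1) (n : ℕ) : ‖c * x ^ n‖ ≤ ‖c‖ := by
  rw [norm_mul, norm_pow]
  calc ‖c‖ * ‖x‖ ^ n ≤ ‖c‖ * 1 :=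
    mul_le_mul_of_nonneg_left (pow_le_one₀ (norm_nonneg x) hx) (norm_nonneg c)
  _ = ‖c‖ := mul_one _

/-- recursively defined sequence -/
def wsSeq {α : Type*} (z : α) (s : ℕ → α → α) : ℕ → α
  | 0 => z
  | j + 1 => s j (wsSeq z s j)

/-- in an ultrametric space, consecutive differences tending to zero implies Cauchy -/
lemma ws_cauchy {y : ℕ → k} (h : Tendsto (fun j => ‖y (j+1) - y j‖) atTop (nhds 0)) :
    CauchySeq y := by
  rw [Metric.cauchySeq_iff']
  intro ε hε
  obtain ⟨M, hM⟩ := Metric.tendsto_atTop.mp h ε hε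
  have hM' : ∀ j, M ≤ j → ‖y (j+1) - y j‖ < ε := by
    intro j hj
    have := hM j hj
    rwa [Real.dist_eq, sub_zero, abs_of_nonneg (norm_nonneg _)] at this
  refine ⟨M, ?_⟩
  intro n hn
  induction n, hn using Nat.le_induction with
  | base => simpa using hε
  | succ n hn ih =>
    have h1 : dist (y (n+1)) (y M) ≤ max (dist (y (n+1)) (y n)) (dist (y n) (y M)) :=
      IsUltrametricDist.dist_triangle_max _ _ _
    refine lt_of_le_of_lt h1 (max_lt ?_ ih)
    rw [dist_eq_norm]
    exact hM' n hn

/-- truncation polynomial -/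
noncomputable def wsTrunc (f : TateSeries k) (m : ℕ) : Polynomial k :=
  ∑ n ∈ Finset.range (m+1), C (f.coeff n) * X ^ n

lemma wsTrunc_coeff (f : TateSeries k) (m j : ℕ) :
    (wsTrunc f m).coeff j = if j ≤ m then f.coeff j else 0 := by
  classical
  rw [wsTrunc, finset_sum_coeff]
  simp only [coeff_C_mul, coeff_X_pow]
  by_cases hj : j ≤ m
  · rw [if_pos hj, Finset.sum_eq_single j (fun b _ hb => by simp [Ne.symm hb])
      (fun h => absurd (Finset.mem_range.mpr (by omega)) h)]
    simp
  · rw [if_neg hj, Finset.sum_eq_zero]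
    intro b hb
    have hbj : j ≠ b := by
      simp only [Finset.mem_range, Nat.lt_succ_iff] at hb
      omega
    simp [hbj]

lemma wsTrunc_eval (f : TateSeries k) (m : ℕ) (x : k) :
    (wsTrunc f m).eval x = ∑ n ∈ Finset.range (m+1), f.coeff n * x ^ n := by
  rw [wsTrunc, eval_finset_sum]
  simp

lemma wsTrunc_succ_eval (f : TateSeries k) (m : ℕ) (x : k) :
    (wsTrunc f (m+1)).eval x = (wsTrunc f m).eval x + f.coeff (m+1) * x ^ (m+1) := by
  rw [wsTrunc_eval, wsTrunc_eval, Finset.sum_range_succ]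

lemma ws_eval_eq_trunc_add_tail (f : TateSeries k) (m : ℕ) {x : k} (hx : ‖x‖ ≤ 1) :
    f.eval x = (wsTrunc f m).eval x + ∑' i, f.coeff (i + (m+1)) * x ^ (i + (m+1)) := by
  rw [wsTrunc_eval, TateSeries.eval]
  exact (Summable.sum_add_tsum_nat_add (m+1) (ws_summable_terms f.tendsto_zero hx)).symm

lemma wsTrunc_dom (f : TateSeries k) {N : ℕ}
    (hpos : 0 < ‖f.coeff N‖) (hle : ∀ n, ‖f.coeff n‖ ≤ ‖f.coeff N‖)
    (hlt : ∀ n, N < n → ‖f.coeff n‖ < ‖f.coeff N‖)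
    {m : ℕ} (hm : N ≤ m) : WsDom (wsTrunc f m) ‖f.coeff N‖ N := by
  refine ⟨by rw [wsTrunc_coeff, if_pos hm], hpos, ?_, ?_⟩
  · intro n
    rw [wsTrunc_coeff]
    split
    · exact hle n
    · simpa using hpos.le
  · intro n hn
    rw [wsTrunc_coeff]
    split
    · exact hlt n hn
    · simpa using hpos

lemma ws_pow_sub {x y : k} (hx : ‖x‖ ≤ 1) (hy : ‖y‖ ≤ 1) (n : ℕ) :
    ‖x ^ n - y ^ n‖ ≤ ‖x - y‖ := by
  induction n with
  | zero => simp
  | succ n ih =>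
    have hr : x ^ (n+1) - y ^ (n+1) = x ^ n * (x - y) + y * (x ^ n - y ^ n) := by ring
    rw [hr]
    refine le_trans (norm_add_le_max _ _) (max_le ?_ ?_)
    · rw [norm_mul]
      calc ‖x ^ n‖ * ‖x - y‖ ≤ 1 * ‖x - y‖ := by
            apply mul_le_mul_of_nonneg_right _ (norm_nonneg _)
            rw [norm_pow]
            exact pow_le_one₀ (norm_nonneg x) hx
        _ = ‖x - y‖ := one_mul _
    · rw [norm_mul]
      calc ‖y‖ * ‖x ^ n - y ^ n‖ ≤ 1 * ‖x - y‖ :=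
            mul_le_mul hy ih (norm_nonneg _) zero_le_one
        _ = ‖x - y‖ := one_mul _

/-- root existence for a Tate series whose largest dominant index is at least 1 -/
lemma ws_root_exists (f : TateSeries k) {N : ℕ} (hN : 1 ≤ N)
    (hpos : 0 < ‖f.coeff N‖) (hle : ∀ n, ‖f.coeff n‖ ≤ ‖f.coeff N‖)
    (hlt : ∀ n, N < n → ‖f.coeff n‖ < ‖f.coeff N‖) :
    ∃ a : k, ‖a‖ ≤ 1 ∧ f.eval a = 0 := by
  classical
  set S := ‖f.coeff N‖ with hS
  -- the step function choosing roots of truncations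
  have step : ∀ (j : ℕ) (a : k), ‖a‖ ≤ 1 →
      ∃ r : k, ‖r‖ ≤ 1 ∧ (wsTrunc f (N+j)).eval r = 0 ∧
        ‖a - r‖ ^ N ≤ ‖(wsTrunc f (N+j)).eval a‖ / S := by
    intro j a ha
    exact ws_poly_key (wsTrunc_dom f hpos hle hlt (by omega)) hN ha
  choose F hF1 hF2 hF3 using step
  have h0 : ‖(0:k)‖ ≤ 1 := by simp
  -- the recursively defined sequence of roots
  set x : ℕ → {a : k // ‖a‖ ≤ 1} :=
    wsSeq ⟨F 0 0 h0, hF1 0 0 h0⟩ (fun j p => ⟨F (j+1) p.1 p.2, hF1 (j+1) p.1 p.2⟩) with hx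
  have hx0 : x 0 = ⟨F 0 0 h0, hF1 0 0 h0⟩ := rfl
  have hxs : ∀ j, x (j+1) = ⟨F (j+1) (x j).1 (x j).2, hF1 (j+1) (x j).1 (x j).2⟩ :=
    fun j => rfl
  have hroot : ∀ j, (wsTrunc f (N+j)).eval ((x j : k)) = 0 := by
    intro j
    cases j with
    | zero => rw [hx0]; exact hF2 0 0 h0
    | succ j => rw [hxs j]; exact hF2 (j+1) (x j).1 (x j).2
  have hdiff : ∀ j, ‖(x j : k) - (x (j+1) : k)‖ ^ N ≤ ‖f.coeff (N+j+1)‖ / S := by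
    intro j
    have h1 : ‖(x j : k) - F (j+1) (x j).1 (x j).2‖ ^ N
        ≤ ‖(wsTrunc f (N+(j+1))).eval ((x j : k))‖ / S := hF3 (j+1) (x j).1 (x j).2
    have h2 : (wsTrunc f (N+(j+1))).eval ((x j : k)) = f.coeff (N+j+1) * (x j : k) ^ (N+j+1) := by
      have : N + (j+1) = (N+j) + 1 := by omega
      rw [this, wsTrunc_succ_eval, hroot j, zero_add]
    rw [h2] at h1
    rw [hxs j]
    refine le_trans h1 ?_
    gcongr
    exact ws_term_norm_le (x j).2 _
  have hctend := f.tendsto_zero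
  have hdtend : Tendsto (fun j => ‖(x (j+1) : k) - (x j : k)‖) atTop (nhds 0) := by
    rw [Metric.tendsto_atTop]
    intro ε hε
    set ε' := min ε 1 with hε'
    have hε'pos : 0 < ε' := lt_min hε one_pos
    have hδ : 0 < S * ε' ^ N := by positivity
    obtain ⟨M, hM⟩ := Metric.tendsto_atTop.mp hctend (S * ε' ^ N) hδ
    refine ⟨M, fun j hj => ?_⟩
    have hcm : ‖f.coeff (N+j+1)‖ < S * ε' ^ N := by
      have := hM (N+j+1) (by omega)
      rwa [Real.dist_eq, sub_zero, abs_of_nonneg (norm_nonneg _)] at this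
    have h1 : ‖(x j : k) - (x (j+1) : k)‖ ^ N ≤ ‖f.coeff (N+j+1)‖ / S := hdiff j
    have h2 : ‖(x j : k) - (x (j+1) : k)‖ ^ N < ε' ^ N := by
      refine lt_of_le_of_lt h1 ?_
      rw [div_lt_iff₀ hpos]
      nlinarith [hcm]
    have h3 : ‖(x j : k) - (x (j+1) : k)‖ < ε' := by
      by_contra hcon
      push_neg at hcon
      exact absurd (pow_le_pow_left₀ hε'pos.le hcon N) (not_le.mpr h2)
    rw [Real.dist_eq, sub_zero, abs_of_nonneg (norm_nonneg _), norm_sub_rev]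
    exact lt_of_lt_of_le h3 (min_le_left _ _)
  have hcauchy : CauchySeq (fun j => (x j : k)) := ws_cauchy hdtend
  obtain ⟨a, ha⟩ := cauchySeq_tendsto_of_complete hcauchy
  have hanorm : ‖a‖ ≤ 1 := by
    have hn : Tendsto (fun j => ‖(x j : k)‖) atTop (nhds ‖a‖) := ha.norm
    exact le_of_tendsto hn (Filter.Eventually.of_forall fun j => (x j).2)
  have hfx : Tendsto (fun j => ‖f.eval ((x j : k))‖) atTop (nhds 0) := by
    rw [Metric.tendsto_atTop]
    intro ε hε
    obtain ⟨M, hM⟩ := Metric.tendsto_atTop.mp hctend (ε/2) (by linarith)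
    refine ⟨M, fun j hj => ?_⟩
    have htail : f.eval ((x j : k))
        = ∑' i, f.coeff (i + (N+j+1)) * (x j : k) ^ (i + (N+j+1)) := by
      have heq := ws_eval_eq_trunc_add_tail f (N+j) (x j).2
      rw [hroot j, zero_add] at heq
      convert heq using 4 <;> omega
    have hterm : ∀ i, ‖f.coeff (i + (N+j+1)) * (x j : k) ^ (i + (N+j+1))‖ ≤ ε/2 := by
      intro i
      refine le_trans (ws_term_norm_le (x j).2 _) ?_
      have := hM (i + (N+j+1)) (by omega)
      rw [Real.dist_eq, sub_zero, abs_of_nonneg (norm_nonneg _)] at this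
      linarith
    rw [Real.dist_eq, sub_zero, abs_of_nonneg (norm_nonneg _), htail]
    calc ‖∑' i, f.coeff (i + (N+j+1)) * (x j : k) ^ (i + (N+j+1))‖ ≤ ε/2 :=
          norm_tsum_le_of_forall_le_of_nonneg (by linarith) hterm
      _ < ε := by linarith
  have hlip : ∀ y z : k, ‖y‖ ≤ 1 → ‖z‖ ≤ 1 → ‖f.eval y - f.eval z‖ ≤ S * ‖y - z‖ := by
    intro y z hy hz
    have hs1 : Summable (fun n => f.coeff n * y ^ n) := ws_summable_terms f.tendsto_zero hy
    have hs2 : Summable (fun n => f.coeff n * z ^ n) := ws_summable_terms f.tendsto_zero hz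
    rw [TateSeries.eval, TateSeries.eval, ← Summable.tsum_sub hs1 hs2]
    apply norm_tsum_le_of_forall_le_of_nonneg (mul_nonneg hpos.le (norm_nonneg _))
    intro n
    rw [← mul_sub, norm_mul]
    exact mul_le_mul (hle n) (ws_pow_sub hy hz n) (norm_nonneg _) hpos.le
  refine ⟨a, hanorm, ?_⟩
  have h1 : Tendsto (fun j => ‖a - (x j : k)‖) atTop (nhds 0) := by
    have h2 := (tendsto_const_nhds (x := a) (f := atTop (α := ℕ))).sub ha
    have h3 := h2.norm
    simpa using h3
  have hseq : Tendsto (fun j => S * ‖a - (x j : k)‖ + ‖f.eval ((x j : k))‖) atTop (nhds 0) := by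
    have := (h1.const_mul S).add hfx
    simpa using this
  have hbound : ∀ j, ‖f.eval a‖ ≤ S * ‖a - (x j : k)‖ + ‖f.eval ((x j : k))‖ := by
    intro j
    calc ‖f.eval a‖ = ‖(f.eval a - f.eval ((x j : k))) + f.eval ((x j : k))‖ := by
          congr 1; ring
      _ ≤ ‖f.eval a - f.eval ((x j : k))‖ + ‖f.eval ((x j : k))‖ := norm_add_le _ _
      _ ≤ S * ‖a - (x j : k)‖ + ‖f.eval ((x j : k))‖ :=
          add_le_add_left (hlip a ((x j : k)) hanorm (x j).2) _
  have hfinal : ‖f.eval a‖ ≤ 0 := ge_of_tendsto' hseq hbound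
  exact norm_le_zero_iff.mp hfinal

lemma ws_shift_tendsto {c : ℕ → k} (hc : Tendsto (fun n => ‖c n‖) atTop (nhds 0)) (m : ℕ) :
    Tendsto (fun i => ‖c (m + i)‖) atTop (nhds 0) := by
  have h := (tendsto_add_atTop_iff_nat m).mpr hc
  exact h.congr (fun i => by rw [add_comm])

lemma ws_tail_summable {c : ℕ → k} (hc : Tendsto (fun n => ‖c n‖) atTop (nhds 0))
    {a : k} (ha : ‖a‖ ≤ 1) (m : ℕ) : Summable (fun i => c (m + i) * a ^ i) := by
  apply ws_summable
  apply squeeze_zero (fun i => norm_nonneg _) (g := fun i => ‖c (m + i)‖)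
    (fun i => ws_term_norm_le ha i) (ws_shift_tendsto hc m)

/-- division of a Tate series by a root in the closed unit disk -/
lemma ws_div_root (f : TateSeries k) {N : ℕ}
    (hpos : 0 < ‖f.coeff (N+1)‖) (hle : ∀ n, ‖f.coeff n‖ ≤ ‖f.coeff (N+1)‖)
    (hlt : ∀ n, N+1 < n → ‖f.coeff n‖ < ‖f.coeff (N+1)‖)
    {a : k} (ha : ‖a‖ ≤ 1) (hra : f.eval a = 0) :
    ∃ g : TateSeries k, 0 < ‖g.coeff N‖ ∧ (∀ n, ‖g.coeff n‖ ≤ ‖g.coeff N‖) ∧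
      (∀ n, N < n → ‖g.coeff n‖ < ‖g.coeff N‖) ∧
      ∀ x : k, ‖x‖ ≤ 1 → f.eval x = (x - a) * g.eval x := by
  classical
  set c := f.coeff with hc
  have hct := f.tendsto_zero
  set S := ‖c (N+1)‖ with hS
  -- the coefficients of the quotient
  set gc : ℕ → k := fun n => ∑' i, c (n + 1 + i) * a ^ i with hgc
  have hsum : ∀ n, Summable (fun i => c (n + 1 + i) * a ^ i) :=
    fun n => ws_tail_summable hct ha (n+1)
  -- norm bound for the coefficients
  have hbnd : ∀ (n : ℕ) (B : ℝ), 0 ≤ B → (∀ m, n + 1 ≤ m → ‖c m‖ ≤ B) → ‖gc n‖ ≤ B := by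
    intro n B hB h
    apply norm_tsum_le_of_forall_le_of_nonneg hB
    intro i
    exact le_trans (ws_term_norm_le ha i) (h (n+1+i) (by omega))
  -- the recurrence
  have hrec : ∀ n, gc n = c (n+1) + a * gc (n+1) := by
    intro n
    have h1 := Summable.tsum_eq_zero_add (hsum n)
    simp only [pow_zero, mul_one, add_zero] at h1
    rw [hgc]
    simp only []
    rw [h1]
    congr 1
    rw [← tsum_mul_left]
    apply tsum_congr
    intro i
    have he : n + 1 + (i + 1) = n + 1 + 1 + i := by omega
    rw [he, pow_succ]
    ring
  -- the root relation
  have hzero : c 0 + a * gc 0 = 0 := by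
    rw [← hra, TateSeries.eval]
    have h1 := Summable.tsum_eq_zero_add (ws_summable_terms hct ha)
    simp only [pow_zero, mul_one] at h1
    rw [h1]
    congr 1
    rw [← tsum_mul_left]
    apply tsum_congr
    intro i
    have he : 0 + 1 + i = i + 1 := by omega
    rw [he, pow_succ]
    ring
  -- dominance transfer
  obtain ⟨ε, hε0, hεS, hεb⟩ := ws_sup_lt (g := fun m => ‖c (N + 2 + m)‖)
    (ws_shift_tendsto hct (N+2)) (fun m => norm_nonneg _) hpos
    (fun m => hlt (N+2+m) (by omega))
  have htailb : ∀ n, N + 1 ≤ n → ‖gc n‖ ≤ ε := by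
    intro n hn
    apply hbnd n ε hε0
    intro m hm
    have : ∃ i, m = N + 2 + i := ⟨m - (N+2), by omega⟩
    obtain ⟨i, rfl⟩ := this
    exact hεb i
  have hgN : ‖gc N‖ = S := by
    rw [hrec N, ws_iso]
    rw [norm_mul]
    calc ‖a‖ * ‖gc (N+1)‖ ≤ 1 * ε :=
          mul_le_mul ha (htailb (N+1) le_rfl) (norm_nonneg _) zero_le_one
      _ = ε := one_mul _
      _ < S := hεS
  -- tendsto of gc
  have hgt : Tendsto (fun n => ‖gc n‖) atTop (nhds 0) := by
    rw [Metric.tendsto_atTop]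
    intro δ hδ
    obtain ⟨M, hM⟩ := Metric.tendsto_atTop.mp hct (δ/2) (by linarith)
    refine ⟨M, fun n hn => ?_⟩
    rw [Real.dist_eq, sub_zero, abs_of_nonneg (norm_nonneg _)]
    have : ‖gc n‖ ≤ δ/2 := by
      apply hbnd n (δ/2) (by linarith)
      intro m hm
      have := hM m (by omega)
      rw [Real.dist_eq, sub_zero, abs_of_nonneg (norm_nonneg _)] at this
      linarith
    linarith
  refine ⟨⟨gc, hgt⟩, ?_, ?_, ?_, ?_⟩
  · simp only []
    rw [hgN]; exact hpos
  · intro n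
    simp only []
    rw [hgN]
    exact hbnd n S hpos.le (fun m _ => hle m)
  · intro n hn
    simp only []
    rw [hgN]
    exact lt_of_le_of_lt (htailb n (by omega)) hεS
  · intro x hx
    have hgsum : Summable (fun n => gc n * x ^ n) := ws_summable_terms hgt hx
    have hgsum1 : Summable (fun n => gc n * x ^ (n+1)) := by
      have := hgsum.mul_right x
      apply this.congr
      intro n
      rw [pow_succ]
      ring
    have hgsum2 : Summable (fun n => a * (gc (n+1) * x ^ (n+1))) := by
      have h1 : Summable (fun n => gc (n+1) * x ^ (n+1)) :=
        (summable_nat_add_iff (f := fun m => gc m * x ^ m) 1).mpr hgsum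
      exact h1.mul_left a
    show f.eval x = (x - a) * TateSeries.eval ⟨gc, hgt⟩ x
    have hev : TateSeries.eval ⟨gc, hgt⟩ x = ∑' n, gc n * x ^ n := rfl
    rw [hev, sub_mul]
    -- x * G
    have hxG : x * ∑' n, gc n * x ^ n = ∑' n, gc n * x ^ (n+1) := by
      rw [← tsum_mul_left]
      apply tsum_congr
      intro n
      rw [pow_succ]
      ring
    -- a * G
    have haG : a * ∑' n, gc n * x ^ n
        = a * (gc 0 * x ^ 0) + ∑' n, a * (gc (n+1) * x ^ (n+1)) := by
      rw [← tsum_mul_left, Summable.tsum_eq_zero_add (hgsum.mul_left a)]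
    rw [hxG, haG]
    have hcomb : ∑' n, gc n * x ^ (n+1) - (a * (gc 0 * x ^ 0) + ∑' n, a * (gc (n+1) * x ^ (n+1)))
        = -(a * gc 0) + ∑' n, (gc n * x ^ (n+1) - a * (gc (n+1) * x ^ (n+1))) := by
      rw [Summable.tsum_sub hgsum1 hgsum2]
      simp only [pow_zero, mul_one]
      ring
    rw [hcomb]
    have hterm : ∀ n, gc n * x ^ (n+1) - a * (gc (n+1) * x ^ (n+1)) = c (n+1) * x ^ (n+1) := by
      intro n
      have := hrec n
      have h2 : gc n - a * gc (n+1) = c (n+1) := by rw [this]; ring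
      calc gc n * x ^ (n+1) - a * (gc (n+1) * x ^ (n+1))
          = (gc n - a * gc (n+1)) * x ^ (n+1) := by ring
        _ = c (n+1) * x ^ (n+1) := by rw [h2]
    have hng : -(a * gc 0) = c 0 := by
      have := hzero
      linear_combination -this
    rw [tsum_congr hterm, hng]
    rw [TateSeries.eval, Summable.tsum_eq_zero_add (ws_summable_terms hct hx)]
    simp only [pow_zero, mul_one]
    rfl

/-- Gauss norm of a series whose coefficients are all bounded by the 0-th, which has norm 1. -/
lemma ws_gauss_one (u : TateSeries k) (h0 : ‖u.coeff 0‖ = 1) (hall : ∀ n, ‖u.coeff n‖ ≤ 1) :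
    u.gaussNorm = 1 := by
  rw [TateSeries.gaussNorm]
  apply le_antisymm
  · exact ciSup_le hall
  · have hbdd : BddAbove (Set.range fun n => ‖u.coeff n‖) := by
      refine ⟨1, ?_⟩
      rintro y ⟨n, rfl⟩
      exact hall n
    have := le_ciSup hbdd 0
    rwa [h0] at this

/-- a unit-type series has evaluations of norm 1 on the closed disk -/
lemma ws_eval_norm_one (u : TateSeries k) (h0 : ‖u.coeff 0‖ = 1)
    (hlt : ∀ i, 0 < i → ‖u.coeff i‖ < 1) {x : k} (hx : ‖x‖ ≤ 1) :
    ‖u.eval x‖ = 1 := by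
  obtain ⟨ε, hε0, hε1, hεb⟩ := ws_sup_lt (g := fun i => ‖u.coeff (1 + i)‖)
    (ws_shift_tendsto u.tendsto_zero 1) (fun i => norm_nonneg _) one_pos
    (fun i => hlt (1+i) (by omega))
  have hsum := ws_summable_terms u.tendsto_zero hx
  rw [TateSeries.eval, Summable.tsum_eq_zero_add hsum]
  simp only [pow_zero, mul_one]
  rw [ws_iso, h0]
  rw [h0]
  apply lt_of_le_of_lt _ hε1
  apply norm_tsum_le_of_forall_le_of_nonneg hε0
  intro i
  refine le_trans (ws_term_norm_le hx (i+1)) ?_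
  have : 1 + i = i + 1 := by omega
  rw [← this]
  exact hεb i

/-- main induction -/
lemma ws_aux : ∀ (N : ℕ) (f : TateSeries k), 0 < ‖f.coeff N‖ →
    (∀ n, ‖f.coeff n‖ ≤ ‖f.coeff N‖) → (∀ n, N < n → ‖f.coeff n‖ < ‖f.coeff N‖) →
    ∃ (c : k) (a : Fin N → k) (u : TateSeries k),
      (∀ j, ‖a j‖ ≤ 1) ∧
      (∀ x : k, ‖x‖ ≤ 1 → ‖u.eval x‖ = 1) ∧
      u.gaussNorm = 1 ∧
      ‖u.coeff 0‖ = 1 ∧ (∀ i : ℕ, 0 < i → ‖u.coeff i‖ < 1) ∧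
      (∀ x : k, ‖x‖ ≤ 1 → f.eval x = c * (∏ j, (x - a j)) * u.eval x) := by
  intro N
  induction N with
  | zero =>
    intro f hpos hle hlt
    have hc0 : f.coeff 0 ≠ 0 := by
      intro h
      rw [h] at hpos
      simpa using hpos
    have hut : Tendsto (fun n => ‖f.coeff n / f.coeff 0‖) atTop (nhds 0) := by
      have := f.tendsto_zero.div_const ‖f.coeff 0‖
      rw [zero_div] at this
      exact this.congr (fun n => by rw [norm_div])
    set u : TateSeries k := ⟨fun n => f.coeff n / f.coeff 0, hut⟩ with hu
    have hu0 : ‖u.coeff 0‖ = 1 := by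
      show ‖f.coeff 0 / f.coeff 0‖ = 1
      rw [div_self hc0, norm_one]
    have hui : ∀ i, 0 < i → ‖u.coeff i‖ < 1 := by
      intro i hi
      show ‖f.coeff i / f.coeff 0‖ < 1
      rw [norm_div, div_lt_one hpos]
      exact hlt i hi
    have huall : ∀ n, ‖u.coeff n‖ ≤ 1 := by
      intro n
      rcases Nat.eq_zero_or_pos n with rfl | hn
      · exact hu0.le
      · exact (hui n hn).le
    refine ⟨f.coeff 0, fun j => 0, u, fun j => j.elim0, ?_, ws_gauss_one u hu0 huall,
      hu0, hui, ?_⟩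
    · intro x hx
      exact ws_eval_norm_one u hu0 hui hx
    · intro x hx
      rw [Finset.univ_eq_empty, Finset.prod_empty, mul_one]
      rw [TateSeries.eval, TateSeries.eval, ← tsum_mul_left]
      apply tsum_congr
      intro n
      show f.coeff n * x ^ n = f.coeff 0 * (f.coeff n / f.coeff 0 * x ^ n)
      field_simp
  | succ N ih =>
    intro f hpos hle hlt
    obtain ⟨a₀, ha₀, hra₀⟩ := ws_root_exists f (by omega) hpos hle hlt
    obtain ⟨g, hgpos, hgle, hglt, hgev⟩ := ws_div_root f hpos hle hlt ha₀ hra₀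
    obtain ⟨c, a, u, haj, hunorm, hug, hu0, hui, hev⟩ := ih g hgpos hgle hglt
    refine ⟨c, Fin.cons a₀ a, u, ?_, hunorm, hug, hu0, hui, ?_⟩
    · intro j
      rcases Fin.eq_zero_or_eq_succ j with rfl | ⟨i, rfl⟩
      · simpa using ha₀
      · simpa using haj i
    · intro x hx
      rw [hgev x hx, hev x hx, Fin.prod_univ_succ]
      simp only [Fin.cons_zero, Fin.cons_succ]
      ring

end WSAux

/-- **Weierstrass preparation.** If `k` is algebraically closed, complete with respect to a
non-trivial non-Archimedean absolute value, and `f ∈ k{T}` is nonzero, then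
`f = c · ∏ⱼ (T - aⱼ) · u` with `c ∈ k`, the `aⱼ` in the closed unit disk, and `u ∈ k{T}` a
unit with `|u(x)| = 1` for every `x` in the closed unit disk (equivalently, `u` has Gauss
norm `1` and all its coefficients of positive degree have absolute value `< 1`). -/
theorem weierstrass_preparation_tate
    (k : Type*) [NontriviallyNormedField k] [IsUltrametricDist k]
    [IsAlgClosed k] [CompleteSpace k]
    (f : TateSeries k) (hf : ∃ n, f.coeff n ≠ 0) :
    ∃ (c : k) (n : ℕ) (a : Fin n → k) (u : TateSeries k),
      (∀ j, ‖a j‖ ≤ 1) ∧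
      (∀ x : k, ‖x‖ ≤ 1 → ‖u.eval x‖ = 1) ∧
      u.gaussNorm = 1 ∧
      ‖u.coeff 0‖ = 1 ∧ (∀ i : ℕ, 0 < i → ‖u.coeff i‖ < 1) ∧
      (∀ x : k, ‖x‖ ≤ 1 → f.eval x = c * (∏ j, (x - a j)) * u.eval x) := by
  obtain ⟨N, hpos, hle, hlt⟩ := ws_dominant f.tendsto_zero hf
  obtain ⟨c, a, u, h1, h2, h3, h4, h5, h6⟩ := ws_aux N f hpos hle hlt
  exact ⟨c, N, a, u, h1, h2, h3, h4, h5, h6⟩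
end

section
/- Let k be an algebraically closed complete non-Archimedean field and k^{max} a maximally complete algebraically closed extension with value group R_{>0} and the same residue field. Let x ∈ A^{1,an}_k be a point of type III, i.e. x = ζ_{a,r} with a ∈ k and r ∉ |k^*|. Then the preimage of x under the projection π : A^{1,an}_{k^{max}} → A^{1,an}_k is the set {z ∈ A^{1,an}_{k^{max}} : |T − a|(z) = r}, which is a closed annulus (over k^{max} the value r is attained since the value group of k^{max} is all of R_{>0}) whose skeleton consists of the single point ζ_{a,r} regarded over k^{max}. -/
/-!
The fiber of the projection `𝔸¹_{k^max} → 𝔸¹_k` over a type III point `ζ_{a,r}`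
(`r ∉ |k^*|`) is the closed annulus `{z : |T - a|(z) = r}`, whose skeleton is the single
point `ζ_{a,r}` regarded over `k^max`.
-/

/-- The Gauss point `ζ_{a,r}` of the Berkovich affine line over `k`. -/
noncomputable def gaussPt (k : Type*) [NontriviallyNormedField k] (a : k) (r : ℝ) :
    Polynomial k → ℝ :=
  fun f => ⨆ n : ℕ, ‖(Polynomial.taylor a f).coeff n‖ * r ^ n

/-- A point of the Berkovich affine line over `K`: a multiplicative ultrametric
seminorm on `K[T]` extending the absolute value of `K`. -/
structure BerkPoint (K : Type*) [NontriviallyNormedField K] where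
  toFun : Polynomial K → ℝ
  nonneg : ∀ f, 0 ≤ toFun f
  map_mul : ∀ f g, toFun (f * g) = toFun f * toFun g
  add_le : ∀ f g, toFun (f + g) ≤ max (toFun f) (toFun g)
  map_C : ∀ c : K, toFun (Polynomial.C c) = ‖c‖

section Aux

variable {K : Type*} [NontriviallyNormedField K]

lemma BerkPoint.map_zero (z : BerkPoint K) : z.toFun 0 = 0 := by
  simpa using z.map_C 0

lemma BerkPoint.map_neg (z : BerkPoint K) (f : Polynomial K) : z.toFun (-f) = z.toFun f := by
  have : (-f : Polynomial K) = Polynomial.C (-1) * f := by ring_nf; simp [Polynomial.C_neg]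
  rw [this, z.map_mul, z.map_C]
  simp

lemma BerkPoint.map_pow (z : BerkPoint K) (f : Polynomial K) (n : ℕ) :
    z.toFun (f ^ n) = z.toFun f ^ n := by
  induction n with
  | zero => simpa using z.map_C 1
  | succ n ih => rw [pow_succ, pow_succ, z.map_mul, ih]

/-- The isosceles property: if the two seminorms differ, the seminorm of the sum is the max. -/
lemma BerkPoint.add_eq_of_ne (z : BerkPoint K) {f g : Polynomial K}
    (h : z.toFun f ≠ z.toFun g) :
    z.toFun (f + g) = max (z.toFun f) (z.toFun g) := by
  wlog hlt : z.toFun g < z.toFun f generalizing f g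
  · rw [add_comm, max_comm]
    exact this h.symm (lt_of_le_of_ne (not_lt.mp hlt) h)
  refine le_antisymm (z.add_le f g) ?_
  rw [max_eq_left hlt.le]
  have h1 : z.toFun f ≤ max (z.toFun (f + g)) (z.toFun g) := by
    have : f = (f + g) + (-g) := by ring
    calc z.toFun f = z.toFun ((f + g) + (-g)) := by rw [← this]
    _ ≤ max (z.toFun (f + g)) (z.toFun (-g)) := z.add_le _ _
    _ = max (z.toFun (f + g)) (z.toFun g) := by rw [z.map_neg]
  rcases max_cases (z.toFun (f + g)) (z.toFun g) with ⟨he, _⟩ | ⟨he, _⟩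
  · rw [he] at h1; exact h1
  · rw [he] at h1; exact absurd h1 (not_le.mpr hlt)

lemma le_fold_max (s : Finset ℕ) (g : ℕ → ℝ) (b : ℝ) : b ≤ s.fold max b g := by
  classical
  induction s using Finset.induction with
  | empty => simp
  | insert _ _ hni ih =>
    rw [Finset.fold_insert hni]
    exact le_trans ih (le_max_right _ _)

lemma mem_le_fold_max {s : Finset ℕ} {n : ℕ} (hn : n ∈ s) (g : ℕ → ℝ) (b : ℝ) :
    g n ≤ s.fold max b g := by
  classical
  induction s using Finset.induction with
  | empty => simp at hn
  | @insert a s hni ih =>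
    rw [Finset.fold_insert hni]
    rcases Finset.mem_insert.mp hn with rfl | hmem
    · exact le_max_left _ _
    · exact le_trans (ih hmem) (le_max_right _ _)

lemma fold_max_le {s : Finset ℕ} {g : ℕ → ℝ} {b c : ℝ} (hb : b ≤ c)
    (h : ∀ n ∈ s, g n ≤ c) : s.fold max b g ≤ c := by
  classical
  induction s using Finset.induction with
  | empty => simpa
  | @insert a s hni ih =>
    rw [Finset.fold_insert hni]
    exact max_le (h a (Finset.mem_insert_self a s)) (ih fun n hn => h n (Finset.mem_insert_of_mem hn))

lemma fold_max_attained (s : Finset ℕ) (g : ℕ → ℝ) :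
    s.fold max 0 g = 0 ∨ ∃ j ∈ s, s.fold max 0 g = g j := by
  classical
  induction s using Finset.induction with
  | empty => left; simp
  | @insert a s hni ih =>
    rw [Finset.fold_insert hni]
    rcases max_cases (g a) (s.fold max 0 g) with ⟨he, _⟩ | ⟨he, _⟩
    · right; exact ⟨a, Finset.mem_insert_self a s, he⟩
    · rcases ih with h0 | ⟨j, hj, hje⟩
      · left; rw [he, h0]
      · right; exact ⟨j, Finset.mem_insert_of_mem hj, he.trans hje⟩

/-- The seminorm of a finite sum of terms with pairwise distinct positive seminorms. -/
lemma BerkPoint.sum_eq_fold (z : BerkPoint K) (s : Finset ℕ) (t : ℕ → Polynomial K)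
    (hpos : ∀ n ∈ s, 0 < z.toFun (t n))
    (hdist : ∀ m ∈ s, ∀ n ∈ s, m ≠ n → z.toFun (t m) ≠ z.toFun (t n)) :
    z.toFun (∑ n ∈ s, t n) = s.fold max 0 (fun n => z.toFun (t n)) := by
  classical
  induction s using Finset.induction with
  | empty => simpa using z.map_zero
  | @insert a s hni ih =>
    rw [Finset.fold_insert hni, Finset.sum_insert hni]
    have hsum : z.toFun (∑ n ∈ s, t n) = s.fold max 0 (fun n => z.toFun (t n)) :=
      ih (fun n hn => hpos n (Finset.mem_insert_of_mem hn))
        (fun m hm n hn => hdist m (Finset.mem_insert_of_mem hm) n (Finset.mem_insert_of_mem hn))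
    have hne : z.toFun (t a) ≠ z.toFun (∑ n ∈ s, t n) := by
      rw [hsum]
      rcases fold_max_attained s (fun n => z.toFun (t n)) with h0 | ⟨j, hj, hje⟩
      · rw [h0]
        exact ne_of_gt (hpos a (Finset.mem_insert_self a s))
      · rw [hje]
        exact hdist a (Finset.mem_insert_self a s) j (Finset.mem_insert_of_mem hj)
          (fun hc => hni (hc ▸ hj))
    rw [z.add_eq_of_ne hne, hsum]

end Aux

section Gauss

variable {k : Type*} [NontriviallyNormedField k]

/-- The Gauss seminorm as a finite max over the Taylor support. -/
lemma gaussPt_eq_fold (a : k) (r : ℝ) (hr : 0 < r) (f : Polynomial k) :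
    gaussPt k a r f = (Polynomial.taylor a f).support.fold max 0
      (fun n => ‖(Polynomial.taylor a f).coeff n‖ * r ^ n) := by
  classical
  set g : ℕ → ℝ := fun n => ‖(Polynomial.taylor a f).coeff n‖ * r ^ n with hg
  set s := (Polynomial.taylor a f).support
  have hub : ∀ n : ℕ, g n ≤ s.fold max 0 g := by
    intro n
    by_cases hn : n ∈ s
    · exact mem_le_fold_max hn g 0
    · have : (Polynomial.taylor a f).coeff n = 0 := Polynomial.notMem_support_iff.mp hn
      rw [hg]
      simp only [this, norm_zero, zero_mul]
      exact le_fold_max s g 0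
  have hbdd : BddAbove (Set.range g) := ⟨s.fold max 0 g, by rintro x ⟨n, rfl⟩; exact hub n⟩
  refine le_antisymm (ciSup_le hub) (fold_max_le ?_ ?_)
  · exact le_trans (by positivity) (le_ciSup hbdd 0)
  · intro n _; exact le_ciSup hbdd n

lemma norm_eq_r_of_pow {k : Type*} [NontriviallyNormedField k] [IsAlgClosed k]
    {r : ℝ} (hr : 0 < r) {c : k} (hc : c ≠ 0) {m : ℕ} (hm : 0 < m)
    (h : ‖c‖ = r ^ m) : ∃ u : k, u ≠ 0 ∧ ‖u‖ = r := by
  obtain ⟨u, hu⟩ := IsAlgClosed.exists_pow_nat_eq c hm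
  refine ⟨u, ?_, ?_⟩
  · rintro rfl
    rw [zero_pow hm.ne'] at hu
    exact hc hu.symm
  · have h1 : ‖u‖ ^ m = r ^ m := by rw [← norm_pow, hu, h]
    exact (pow_left_strictMonoOn₀ hm.ne').injOn (norm_nonneg u) hr.le h1

end Gauss

theorem fiber_over_typeIII_point
    (k K : Type*) [NontriviallyNormedField k] [NontriviallyNormedField K]
    [IsUltrametricDist k] [IsUltrametricDist K]
    [IsAlgClosed k] [IsAlgClosed K] [CompleteSpace k] [CompleteSpace K]
    [Algebra k K]
    (hiso : ∀ c : k, ‖algebraMap k K c‖ = ‖c‖)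
    (hfull : ∀ r : ℝ, 0 < r → ∃ y : K, ‖y‖ = r)
    (hres : ∀ y : K, ‖y‖ ≤ 1 → ∃ c : k, ‖y - algebraMap k K c‖ < 1)
    -- a type III point `ζ_{a,r}`: `a ∈ k`, `r > 0`, and `r ∉ |k^*|`:
    (a : k) (r : ℝ) (hr : 0 < r) (hr' : ∀ u : k, u ≠ 0 → ‖u‖ ≠ r) :
    -- the fiber over `ζ_{a,r}` is exactly the annulus `{z : |T - a|(z) = r}` …
    (∀ z : BerkPoint K,
      ((∀ f : Polynomial k, z.toFun (f.map (algebraMap k K)) = gaussPt k a r f) ↔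
        z.toFun (Polynomial.X - Polynomial.C (algebraMap k K a)) = r)) ∧
    -- … and it contains the point `ζ_{a,r}` regarded over `K` (its skeleton):
    (∀ f : Polynomial k,
      gaussPt K (algebraMap k K a) r (f.map (algebraMap k K)) = gaussPt k a r f) := by
  classical
  set φ : k →+* K := algebraMap k K with hφ
  -- Taylor expansion commutes with the base change.
  have htaylor : ∀ f : Polynomial k,
      Polynomial.taylor (φ a) (f.map φ) = (Polynomial.taylor a f).map φ := by
    intro f
    rw [Polynomial.taylor_apply, Polynomial.taylor_apply, Polynomial.map_comp]
    simp
  -- The Gauss value of `X - C a` is `r`.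
  have hXa : gaussPt k a r (Polynomial.X - Polynomial.C a) = r := by
    have ht : Polynomial.taylor a (Polynomial.X - Polynomial.C a) = Polynomial.X := by
      rw [map_sub, Polynomial.taylor_X, Polynomial.taylor_C]; ring
    unfold gaussPt
    rw [ht]
    have hco : ∀ n : ℕ, ‖(Polynomial.X : Polynomial k).coeff n‖ * r ^ n
        = if n = 1 then r else 0 := by
      intro n
      by_cases hn : n = 1
      · subst hn; simp
      · simp [Polynomial.coeff_X, hn, if_neg (Ne.symm hn)]
    have hbdd : BddAbove (Set.range fun n : ℕ =>
        ‖(Polynomial.X : Polynomial k).coeff n‖ * r ^ n) := by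
      refine ⟨r, ?_⟩
      rintro x ⟨n, rfl⟩
      dsimp only
      rw [hco n]
      split <;> simp [hr.le]
    refine le_antisymm (ciSup_le fun n => ?_) ?_
    · rw [hco n]
      split <;> simp [hr.le]
    · calc r = ‖(Polynomial.X : Polynomial k).coeff 1‖ * r ^ 1 := by simp
        _ ≤ _ := le_ciSup hbdd 1
  constructor
  · intro z
    constructor
    · -- forward: evaluate at `f = X - C a`
      intro h
      have := h (Polynomial.X - Polynomial.C a)
      rwa [Polynomial.map_sub, Polynomial.map_X, Polynomial.map_C, hXa] at this
    · -- backward: the annulus condition determines the whole seminorm on `k[T]`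
      intro hz f
      set p := Polynomial.taylor a f with hp
      set s := p.support with hs
      set t : ℕ → Polynomial K := fun n =>
        Polynomial.C (φ (p.coeff n)) * (Polynomial.X - Polynomial.C (φ a)) ^ n with htdef
      -- compute `f.map φ` as a sum of the terms `t n`
      have hfmap : f.map φ = ∑ n ∈ s, t n := by
        conv_lhs => rw [← Polynomial.sum_taylor_eq f a]
        rw [Polynomial.sum, Polynomial.map_sum]
        refine Finset.sum_congr rfl fun n _ => ?_
        rw [Polynomial.map_mul, Polynomial.map_pow, Polynomial.map_sub, Polynomial.map_X,
          Polynomial.map_C, Polynomial.map_C]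
      -- the seminorm of each term
      have hterm : ∀ n : ℕ, z.toFun (t n) = ‖p.coeff n‖ * r ^ n := by
        intro n
        rw [htdef]
        dsimp only
        rw [z.map_mul, z.map_C, z.map_pow, hz, hiso]
      have hpos : ∀ n ∈ s, 0 < z.toFun (t n) := by
        intro n hn
        rw [hterm]
        have : p.coeff n ≠ 0 := Polynomial.mem_support_iff.mp hn
        exact mul_pos (norm_pos_iff.mpr this) (pow_pos hr n)
      have hdist : ∀ m ∈ s, ∀ n ∈ s, m ≠ n → z.toFun (t m) ≠ z.toFun (t n) := by
        intro m hm n hn hmn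
        wlog hlt : m < n generalizing m n
        · exact fun hc => this n hn m hm hmn.symm (by omega) hc.symm
        rw [hterm, hterm]
        intro hc
        have hcm : p.coeff m ≠ 0 := Polynomial.mem_support_iff.mp hm
        have hcn : p.coeff n ≠ 0 := Polynomial.mem_support_iff.mp hn
        -- `‖c_m‖ r^m = ‖c_n‖ r^n` gives `‖c_m / c_n‖ = r^(n-m)`
        have hq : ‖p.coeff m / p.coeff n‖ = r ^ (n - m) := by
          rw [norm_div]
          rw [div_eq_iff (norm_ne_zero_iff.mpr hcn)]
          have : r ^ (n - m) * r ^ m = r ^ n := by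
            rw [← pow_add]; congr 1; omega
          have h2 : ‖p.coeff m‖ * r ^ m = ‖p.coeff n‖ * (r ^ (n - m) * r ^ m) := by
            rw [this]; exact hc
          have h3 := mul_right_cancel₀ (by positivity : (r : ℝ) ^ m ≠ 0) (by
            calc ‖p.coeff m‖ * r ^ m = ‖p.coeff n‖ * r ^ (n - m) * r ^ m := by
                  rw [mul_assoc]; exact h2)
          rw [h3, mul_comm]
        obtain ⟨u, hu0, hur⟩ := norm_eq_r_of_pow hr (div_ne_zero hcm hcn) (by omega : 0 < n - m) hq
        exact hr' u hu0 hur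
      rw [hfmap, z.sum_eq_fold s t hpos hdist, gaussPt_eq_fold a r hr f]
      refine Finset.fold_congr fun n hn => ?_
      rw [hterm]
  · -- the skeleton point
    intro f
    unfold gaussPt
    refine iSup_congr fun n => ?_
    rw [htaylor f, Polynomial.coeff_map, hiso]
end

section
/- Let k be an algebraically closed complete non-Archimedean field, f : O(0,1) → O(0,1) a finite surjective étale analytic map with f(0) = 0 and zero set Z = {β_0 = 0, β_1, …, β_n} (all simple zeros). For x = 0 and t ∈ (0,∞), define B(t) := {z ∈ Z : |z| ≤ exp(−t)} (zeros whose path to the skeleton merges with the path from 0 by time −log corresponding to radius exp(−t), here simply zeros in the closed ball of radius exp(−t)). Then card B(t) equals the slope d of the profile function f_0 at t, and ∑_{z ∈ B(t), z ≠ 0} (−log|z|) equals the total drop of the intercept: if f_0(s) = d s + α on the piece containing t and f_0(s) = s + α_max wholly near s = ∞ (slope 1, α_max = ∑_{z ∈ Z, z≠0}(−log|z|)), then α = α_max − ∑_{z ∈ B(t), z ≠ 0} (−log|z|). -/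
/-!
The backward branching data at time `t` (the number of merged zeros and the sum of
their valuations) determines, and is determined by, the slope and intercept of the
profile function of a finite surjective étale analytic self-map of the open unit disk.
-/

set_option linter.unusedSectionVars false
set_option linter.unusedVariables false
set_option maxHeartbeats 1600000

open IsUltrametricDist Polynomial Filter

section Helpers
variable {k : Type*} [NontriviallyNormedField k] [IsUltrametricDist k]

lemma bbdp_norm_hasSum_le {f : ℕ → k} {s : k} {c : ℝ} (h : HasSum f s) (hc : 0 ≤ c)
    (hf : ∀ i, ‖f i‖ ≤ c) : ‖s‖ ≤ c := by
  rw [← h.tsum_eq]; exact norm_tsum_le_of_forall_le_of_nonneg hc hf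

lemma bbdp_norm_add_eq_left {x y : k} (h : ‖y‖ < ‖x‖) : ‖x + y‖ = ‖x‖ := by
  rw [norm_add_eq_max_of_norm_ne_norm (by exact fun he => absurd he.symm h.ne)]
  exact max_eq_left h.le

lemma bbdp_norm_sub_eq_max {x y : k} (h : ‖x‖ ≠ ‖y‖) : ‖x - y‖ = max ‖x‖ ‖y‖ := by
  rw [sub_eq_add_neg, norm_add_eq_max_of_norm_ne_norm (by rwa [norm_neg]), norm_neg]

lemma bbdp_norm_sub_le_max (x y : k) : ‖x - y‖ ≤ max ‖x‖ ‖y‖ := by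
  rw [sub_eq_add_neg]
  exact (norm_add_le_max x (-y)).trans (by rw [norm_neg])

lemma bbdp_norm_pow_sub_pow {x y : k} (hx : ‖x‖ ≤ 1) (hy : ‖y‖ ≤ 1) (m : ℕ) :
    ‖x ^ m - y ^ m‖ ≤ ‖x - y‖ := by
  induction m with
  | zero => simp
  | succ m ih =>
    have : x ^ (m+1) - y ^ (m+1) = x * (x ^ m - y ^ m) + (x - y) * y ^ m := by ring
    rw [this]
    refine (norm_add_le_max _ _).trans (max_le ?_ ?_)
    · rw [norm_mul]
      calc ‖x‖ * ‖x ^ m - y ^ m‖ ≤ 1 * ‖x - y‖ := by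
            exact mul_le_mul hx ih (norm_nonneg _) zero_le_one
        _ = ‖x - y‖ := one_mul _
    · rw [norm_mul]
      calc ‖x - y‖ * ‖y ^ m‖ ≤ ‖x - y‖ * 1 := by
            refine mul_le_mul_of_nonneg_left ?_ (norm_nonneg _)
            rw [norm_pow]; exact pow_le_one₀ (norm_nonneg _) hy
        _ = ‖x - y‖ := mul_one _

lemma bbdp_exists_norm_btwn (k : Type*) [NontriviallyNormedField k] [IsAlgClosed k]
    {x y : ℝ} (hx : 0 < x) (hxy : x < y) : ∃ a : k, x < ‖a‖ ∧ ‖a‖ < y := by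
  obtain ⟨c, hc⟩ := NormedField.exists_one_lt_norm k
  have hq1 : 1 < Real.sqrt (y / x) := by
    rw [show (1:ℝ) = Real.sqrt 1 by simp]
    exact Real.sqrt_lt_sqrt zero_le_one ((one_lt_div hx).mpr hxy)
  obtain ⟨m, hm⟩ := pow_unbounded_of_one_lt ‖c‖ hq1
  have hm1 : 1 ≤ m := by
    rcases Nat.eq_zero_or_pos m with h | h
    · exfalso; rw [h] at hm; simp at hm; linarith
    · exact h
  obtain ⟨γ, hγ⟩ := IsAlgClosed.exists_pow_nat_eq c (by omega : 0 < m)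
  set g := ‖γ‖ with hg
  have hgm : g ^ m = ‖c‖ := by rw [hg, ← norm_pow, hγ]
  have hg1 : 1 < g := by
    by_contra h
    push_neg at h
    have : g ^ m ≤ 1 := pow_le_one₀ (norm_nonneg _) h
    rw [hgm] at this; linarith
  have hgq : g < Real.sqrt (y / x) := by
    by_contra h
    push_neg at h
    have := pow_le_pow_left₀ (by positivity) h m
    rw [hgm] at this
    linarith
  obtain ⟨j, hj1, hj2⟩ := exists_mem_Ioc_zpow hx hg1
  have hg0 : (0:ℝ) < g := lt_trans one_pos hg1
  refine ⟨γ ^ (j + 2), ?_, ?_⟩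
  · rw [norm_zpow]
    calc x ≤ g ^ (j + 1) := hj2
      _ < g ^ (j + 2) := by
        apply zpow_lt_zpow_right₀ hg1; omega
  · rw [norm_zpow]
    have h1 : g ^ (j + 2) = g ^ (2:ℕ) * g ^ j := by
      rw [zpow_add₀ hg0.ne' j 2, mul_comm, ← zpow_natCast g 2]; norm_num
    have h2 : g ^ (2:ℕ) < Real.sqrt (y / x) ^ (2:ℕ) := by
      apply pow_lt_pow_left₀ hgq hg0.le
      omega
    have h3 : Real.sqrt (y / x) ^ (2:ℕ) = y / x := Real.sq_sqrt (div_nonneg (by linarith) hx.le)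
    calc g ^ (j + 2) = g ^ (2:ℕ) * g ^ j := h1
      _ < (y / x) * x := by
        apply mul_lt_mul' (by rw [← h3]; exact h2.le) hj1 (zpow_pos hg0 j).le (div_pos (lt_trans hx hxy) hx)
      _ = y := by field_simp


lemma bbdp_norm_multiset_prod (s : Multiset k) : ‖s.prod‖ = (s.map fun z => ‖z‖).prod := by
  induction s using Multiset.induction_on with
  | empty => simp
  | cons z s ih => simp [Multiset.prod_cons, norm_mul, ih]

lemma bbdp_prod_le_one {s : Multiset k} (h : ∀ z ∈ s, ‖z‖ ≤ 1) :
    (s.map fun z => ‖z‖).prod ≤ 1 := by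
  induction s using Multiset.induction_on with
  | empty => simp
  | cons z s ih =>
    simp only [Multiset.map_cons, Multiset.prod_cons]
    calc ‖z‖ * (s.map fun z => ‖z‖).prod ≤ 1 * 1 := by
          refine mul_le_mul (h z (Multiset.mem_cons_self _ _)) (ih ?_) ?_ zero_le_one
          · exact fun w hw => h w (Multiset.mem_cons_of_mem hw)
          · exact Multiset.prod_nonneg (by intro x hx; simp only [Multiset.mem_map] at hx; obtain ⟨z,_,rfl⟩ := hx; exact norm_nonneg z)
      _ = 1 := one_mul _

lemma bbdp_one_le_prod {s : Multiset k} (h : ∀ z ∈ s, 1 < ‖z‖) :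
    1 ≤ (s.map fun z => ‖z‖).prod := by
  induction s using Multiset.induction_on with
  | empty => simp
  | cons z s ih =>
    simp only [Multiset.map_cons, Multiset.prod_cons]
    calc (1:ℝ) = 1 * 1 := (one_mul 1).symm
      _ ≤ ‖z‖ * (s.map fun z => ‖z‖).prod := by
          refine mul_le_mul (h z (Multiset.mem_cons_self _ _)).le
            (ih fun w hw => h w (Multiset.mem_cons_of_mem hw)) zero_le_one ?_
          exact (norm_nonneg z)

lemma bbdp_coeff_le_one {s : Multiset k} (h : ∀ z ∈ s, ‖z‖ ≤ 1) (j : ℕ) :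
    ‖((s.map fun z => X - C z).prod).coeff j‖ ≤ 1 := by
  induction s using Multiset.induction_on generalizing j with
  | empty =>
    simp only [Multiset.map_zero, Multiset.prod_zero, coeff_one]
    split <;> simp
  | cons z s ih =>
    have hz := h z (Multiset.mem_cons_self _ _)
    have h' : ∀ w ∈ s, ‖w‖ ≤ 1 := fun w hw => h w (Multiset.mem_cons_of_mem hw)
    simp only [Multiset.map_cons, Multiset.prod_cons]
    rw [mul_comm]
    cases j with
    | zero =>
      rw [mul_coeff_zero]
      rw [norm_mul]
      calc ‖((s.map fun z => X - C z).prod).coeff 0‖ * ‖(X - C z).coeff 0‖ ≤ 1 * 1 := by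
            refine mul_le_mul (ih h' 0) ?_ (norm_nonneg _) zero_le_one
            simp [coeff_sub, hz]
        _ = 1 := one_mul _
    | succ j =>
      rw [coeff_mul_X_sub_C]
      refine (bbdp_norm_sub_le_max _ _).trans (max_le (ih h' j) ?_)
      rw [norm_mul]
      calc ‖((s.map fun z => X - C z).prod).coeff (j+1)‖ * ‖z‖ ≤ 1 * 1 :=
            mul_le_mul (ih h' (j+1)) hz (norm_nonneg _) zero_le_one
        _ = 1 := one_mul _

lemma bbdp_coeff_zero_norm (s : Multiset k) :
    ‖((s.map fun z => X - C z).prod).coeff 0‖ = (s.map fun z => ‖z‖).prod := by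
  induction s using Multiset.induction_on with
  | empty => simp
  | cons z s ih =>
    simp only [Multiset.map_cons, Multiset.prod_cons]
    rw [mul_comm, mul_coeff_zero, norm_mul, ih]
    have : (X - C z).coeff 0 = -z := by simp [coeff_sub]
    rw [this, norm_neg, mul_comm]

lemma bbdp_coeff_lt {s : Multiset k} (h : ∀ z ∈ s, 1 < ‖z‖) {j : ℕ} (hj : j ≠ 0) :
    ‖((s.map fun z => X - C z).prod).coeff j‖ < (s.map fun z => ‖z‖).prod := by
  induction s using Multiset.induction_on generalizing j with
  | empty =>
    simp only [Multiset.map_zero, Multiset.prod_zero, coeff_one, if_neg hj]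
    simp [hj]
  | cons z s ih =>
    have hz := h z (Multiset.mem_cons_self _ _)
    have h' : ∀ w ∈ s, 1 < ‖w‖ := fun w hw => h w (Multiset.mem_cons_of_mem hw)
    have hprodpos : (0:ℝ) < (s.map fun z => ‖z‖).prod := lt_of_lt_of_le one_pos (bbdp_one_le_prod h')
    simp only [Multiset.map_cons, Multiset.prod_cons]
    rw [mul_comm]
    obtain ⟨j, rfl⟩ := Nat.exists_eq_succ_of_ne_zero hj
    rw [coeff_mul_X_sub_C]
    refine lt_of_le_of_lt (bbdp_norm_sub_le_max _ _) (max_lt ?_ ?_)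
    · rcases Nat.eq_zero_or_pos j with rfl | hjpos
      · rw [bbdp_coeff_zero_norm]
        calc (s.map fun z => ‖z‖).prod = 1 * (s.map fun z => ‖z‖).prod := (one_mul _).symm
          _ < ‖z‖ * (s.map fun z => ‖z‖).prod := by
              exact mul_lt_mul_of_pos_right hz hprodpos
      · calc ‖((s.map fun z => X - C z).prod).coeff j‖ < (s.map fun z => ‖z‖).prod :=
              ih h' hjpos.ne'
          _ = 1 * (s.map fun z => ‖z‖).prod := (one_mul _).symm
          _ < ‖z‖ * (s.map fun z => ‖z‖).prod := mul_lt_mul_of_pos_right hz hprodpos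
    · rw [norm_mul, mul_comm]
      exact mul_lt_mul_of_pos_left (ih h' (Nat.succ_ne_zero j)) (lt_trans one_pos hz)


end Helpers

namespace BBDP

variable {k : Type*} [NontriviallyNormedField k] [IsUltrametricDist k] [IsAlgClosed k]
  [CompleteSpace k]

/-- roots inside the closed unit ball -/
noncomputable def In (p : k[X]) : Multiset k := p.roots.filter fun z => ‖z‖ ≤ 1
/-- roots outside the closed unit ball -/
noncomputable def Out (p : k[X]) : Multiset k := p.roots.filter fun z => ¬‖z‖ ≤ 1
noncomputable def prodO (p : k[X]) : ℝ := ((Out p).map fun z => ‖z‖).prod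
noncomputable def prodI (p : k[X]) : ℝ := ((In p).map fun z => ‖z‖).prod

lemma mem_In {p : k[X]} {z : k} (h : z ∈ In p) : ‖z‖ ≤ 1 ∧ z ∈ p.roots := by
  rw [In, Multiset.mem_filter] at h; exact ⟨h.2, h.1⟩

lemma mem_Out {p : k[X]} {z : k} (h : z ∈ Out p) : 1 < ‖z‖ := by
  rw [Out, Multiset.mem_filter] at h; exact lt_of_not_ge h.2

lemma one_le_prodO (p : k[X]) : 1 ≤ prodO p := bbdp_one_le_prod fun z hz => mem_Out hz

lemma prodO_pos (p : k[X]) : 0 < prodO p := lt_of_lt_of_le one_pos (one_le_prodO p)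

lemma prodI_le_one (p : k[X]) : prodI p ≤ 1 := bbdp_prod_le_one fun z hz => (mem_In hz).1

lemma prodI_pos {p : k[X]} (hp0 : p.coeff 0 ≠ 0) : 0 < prodI p := by
  apply Multiset.prod_pos
  intro x hx
  simp only [prodI, Multiset.mem_map] at hx
  obtain ⟨z, hz, rfl⟩ := hx
  have : z ≠ 0 := by
    intro h
    have hroot := (mem_In hz).2
    rw [Polynomial.mem_roots'] at hroot
    apply hp0
    have := hroot.2
    rw [h] at this
    rwa [Polynomial.IsRoot, ← Polynomial.coeff_zero_eq_eval_zero] at this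
  simpa using this

lemma card_In_le {p : k[X]} : Multiset.card (In p) ≤ p.natDegree := by
  refine le_trans (Multiset.card_le_card (Multiset.filter_le _ _)) p.card_roots'

lemma key_fact {p : k[X]} (hp : p ≠ 0) :
    p = C p.leadingCoeff *
      ((((In p).map fun z => X - C z).prod) * (((Out p).map fun z => X - C z).prod)) := by
  conv_lhs => rw [(IsAlgClosed.splits p).eq_prod_roots]
  congr 1
  rw [← Multiset.prod_add, ← Multiset.map_add, In, Out, Multiset.filter_add_not]

lemma PI_monic (p : k[X]) : (((In p).map fun z => X - C z).prod).Monic :=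
  monic_multiset_prod_of_monic _ _ fun z _ => monic_X_sub_C z

lemma PI_natDegree (p : k[X]) :
    (((In p).map fun z => X - C z).prod).natDegree = Multiset.card (In p) := by
  rw [Polynomial.natDegree_multiset_prod_X_sub_C_eq_card]

lemma key_coeff_eq {p : k[X]} (hp : p ≠ 0) :
    ‖p.coeff (Multiset.card (In p))‖ = ‖p.leadingCoeff‖ * prodO p := by
  set K := Multiset.card (In p)
  set PI := ((In p).map fun z => X - C z).prod with hPI
  set PO := ((Out p).map fun z => X - C z).prod with hPO
  have hco : p.coeff K = p.leadingCoeff * (PI * PO).coeff K := by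
    conv_lhs => rw [key_fact hp]
    rw [Polynomial.coeff_C_mul]
  rw [hco, norm_mul]
  congr 1
  rw [Polynomial.coeff_mul]
  have hmem : (K, 0) ∈ Finset.HasAntidiagonal.antidiagonal K := by
    rw [Finset.HasAntidiagonal.mem_antidiagonal]; simp
  rw [← Finset.add_sum_erase _ _ hmem]
  have hmain : ‖PI.coeff (K, 0).1 * PO.coeff (K, 0).2‖ = prodO p := by
    have h1 : PI.coeff K = 1 := by
      have := (PI_monic p).coeff_natDegree
      rwa [PI_natDegree p] at this
    simp only [h1, one_mul]
    exact bbdp_coeff_zero_norm _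
  have hrest : ‖∑ x ∈ (Finset.HasAntidiagonal.antidiagonal K).erase (K, 0), PI.coeff x.1 * PO.coeff x.2‖
      < prodO p := by
    rcases Finset.eq_empty_or_nonempty ((Finset.HasAntidiagonal.antidiagonal K).erase (K, 0)) with he | hne
    · rw [he, Finset.sum_empty, norm_zero]; exact prodO_pos p
    · refine lt_of_le_of_lt (hne.norm_sum_le_sup'_norm _) ?_
      rw [Finset.sup'_lt_iff]
      intro x hx
      have hx2 : x.2 ≠ 0 := by
        intro h2
        have hxmem := Finset.mem_of_mem_erase hx
        rw [Finset.HasAntidiagonal.mem_antidiagonal] at hxmem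
        apply Finset.ne_of_mem_erase hx
        have hx1 : x.1 = K := by omega
        have : x = (x.1, x.2) := rfl
        rw [this, hx1, h2]
      rw [norm_mul]
      calc ‖PI.coeff x.1‖ * ‖PO.coeff x.2‖ ≤ 1 * ‖PO.coeff x.2‖ := by
            refine mul_le_mul_of_nonneg_right ?_ (norm_nonneg _)
            exact bbdp_coeff_le_one (fun z hz => (mem_In hz).1) _
        _ = ‖PO.coeff x.2‖ := one_mul _
        _ < prodO p := bbdp_coeff_lt (fun z hz => mem_Out hz) hx2
  rw [bbdp_norm_add_eq_left (lt_of_lt_of_le hrest (le_of_eq hmain.symm))]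
  exact hmain

lemma key_coeff_lt {p : k[X]} (hp : p ≠ 0) {j : ℕ} (hj : Multiset.card (In p) < j) :
    ‖p.coeff j‖ < ‖p.leadingCoeff‖ * prodO p := by
  set K := Multiset.card (In p)
  set PI := ((In p).map fun z => X - C z).prod with hPI
  set PO := ((Out p).map fun z => X - C z).prod with hPO
  have hlc : 0 < ‖p.leadingCoeff‖ := by
    rw [norm_pos_iff]; exact Polynomial.leadingCoeff_ne_zero.mpr hp
  have hco : p.coeff j = p.leadingCoeff * (PI * PO).coeff j := by
    conv_lhs => rw [key_fact hp]
    rw [Polynomial.coeff_C_mul]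
  rw [hco, norm_mul]
  refine mul_lt_mul_of_pos_left ?_ hlc
  rw [Polynomial.coeff_mul]
  have hterm : ∀ x ∈ Finset.HasAntidiagonal.antidiagonal j, ‖PI.coeff x.1 * PO.coeff x.2‖ < prodO p := by
    intro x hx
    rw [Finset.HasAntidiagonal.mem_antidiagonal] at hx
    rcases le_or_gt x.1 K with h1 | h1
    · have hx2 : x.2 ≠ 0 := by omega
      rw [norm_mul]
      calc ‖PI.coeff x.1‖ * ‖PO.coeff x.2‖ ≤ 1 * ‖PO.coeff x.2‖ := by
            refine mul_le_mul_of_nonneg_right ?_ (norm_nonneg _)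
            exact bbdp_coeff_le_one (fun z hz => (mem_In hz).1) _
        _ = ‖PO.coeff x.2‖ := one_mul _
        _ < prodO p := bbdp_coeff_lt (fun z hz => mem_Out hz) hx2
    · have : PI.coeff x.1 = 0 := by
        apply Polynomial.coeff_eq_zero_of_natDegree_lt
        rwa [PI_natDegree p]
      rw [this, zero_mul, norm_zero]
      exact prodO_pos p
  rcases Finset.eq_empty_or_nonempty (Finset.HasAntidiagonal.antidiagonal j) with he | hne
  · rw [he, Finset.sum_empty, norm_zero]; exact prodO_pos p
  · refine lt_of_le_of_lt (hne.norm_sum_le_sup'_norm _) ?_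
    rw [Finset.sup'_lt_iff]
    exact hterm

lemma key_coeff_zero {p : k[X]} (hp : p ≠ 0) :
    ‖p.coeff 0‖ = ‖p.leadingCoeff‖ * prodO p * prodI p := by
  have hco : p.coeff 0 = p.leadingCoeff *
      ((((In p).map fun z => X - C z).prod).coeff 0 * (((Out p).map fun z => X - C z).prod).coeff 0) := by
    conv_lhs => rw [key_fact hp]
    rw [Polynomial.coeff_C_mul, Polynomial.mul_coeff_zero]
  rw [hco, norm_mul, norm_mul, bbdp_coeff_zero_norm, bbdp_coeff_zero_norm]
  rw [prodO, prodI]; ring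

lemma key_eval {p : k[X]} (hp : p ≠ 0) {w : k} (hw : ‖w‖ ≤ 1) :
    ‖p.eval w‖ = ‖p.leadingCoeff‖ * prodO p * ((In p).map fun z => ‖w - z‖).prod := by
  have hev : p.eval w = p.leadingCoeff *
      (((In p).map fun z => w - z).prod * ((Out p).map fun z => w - z).prod) := by
    conv_lhs => rw [key_fact hp]
    rw [Polynomial.eval_mul, Polynomial.eval_C, Polynomial.eval_mul]
    congr 2 <;> rw [Polynomial.eval_multiset_prod, Multiset.map_map] <;>
      congr 1 <;> exact Multiset.map_congr rfl fun z _ => by simp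
  rw [hev, norm_mul, norm_mul, bbdp_norm_multiset_prod, bbdp_norm_multiset_prod]
  have hOut : ((Out p).map fun z => w - z).map (fun z => ‖z‖) = (Out p).map fun z => ‖z‖ := by
    rw [Multiset.map_map]
    refine Multiset.map_congr rfl fun z hz => ?_
    have h1 : 1 < ‖z‖ := mem_Out hz
    have hne : ‖w‖ ≠ ‖z‖ := by intro h; rw [h] at hw; linarith
    rw [Function.comp_apply, bbdp_norm_sub_eq_max hne, max_eq_right (le_trans hw h1.le)]
  rw [hOut]
  have hIn : ((In p).map fun z => w - z).map (fun z => ‖z‖) = (In p).map fun z => ‖w - z‖ := by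
    rw [Multiset.map_map]; rfl
  rw [hIn, prodO]; ring

lemma prodI_eq_one_of_In_eq_zero {p : k[X]} (h : In p = 0) : prodI p = 1 := by
  rw [prodI, h]; simp

lemma pow_le_prodR {δ : ℝ} (hδ : 0 < δ) : ∀ {s : Multiset ℝ}, (∀ x ∈ s, δ ≤ x) →
    δ ^ Multiset.card s ≤ s.prod := by
  intro s
  induction s using Multiset.induction_on with
  | empty => simp
  | cons z s ih =>
    intro h
    rw [Multiset.prod_cons, Multiset.card_cons, pow_succ, mul_comm (δ ^ Multiset.card s) δ]
    have h1 : δ ≤ z := h z (Multiset.mem_cons_self _ _)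
    have h2 := ih fun x hx => h x (Multiset.mem_cons_of_mem hx)
    exact mul_le_mul h1 h2 (by positivity) (le_trans hδ.le h1)

lemma pow_lt_prodR {δ : ℝ} (hδ : 0 < δ) {s : Multiset ℝ} (hs : s ≠ 0)
    (h : ∀ x ∈ s, δ < x) : δ ^ Multiset.card s < s.prod := by
  obtain ⟨z, hz⟩ := Multiset.exists_mem_of_ne_zero hs
  obtain ⟨s', rfl⟩ := Multiset.exists_cons_of_mem hz
  rw [Multiset.prod_cons, Multiset.card_cons, pow_succ, mul_comm (δ ^ Multiset.card s') δ]
  have h1 : δ < z := h z (Multiset.mem_cons_self _ _)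
  have h2 := pow_le_prodR hδ (s := s') fun x hx => (h x (Multiset.mem_cons_of_mem hx)).le
  have hpos : 0 < δ ^ Multiset.card s' := by positivity
  calc δ * δ ^ Multiset.card s' < z * δ ^ Multiset.card s' := by
        exact mul_lt_mul_of_pos_right h1 hpos
    _ ≤ z * s'.prod := by
        exact mul_le_mul_of_nonneg_left h2 (le_trans hδ.le h1.le)

lemma strassmann_zero {k : Type*} [NontriviallyNormedField k] [IsUltrametricDist k]
    [IsAlgClosed k] [CompleteSpace k]
    {b : ℕ → k}
    (hb : Tendsto (fun m => ‖b m‖) atTop (nhds 0))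
    {mh : ℕ} (hm1 : 1 ≤ mh) (hdom : ‖b 0‖ < ‖b mh‖)
    {S : k → k} (hS : ∀ x : k, ‖x‖ ≤ 1 → HasSum (fun m => b m * x ^ m) (S x)) :
    ∃ z : k, ‖z‖ ≤ 1 ∧ S z = 0 := by
  rcases eq_or_ne (b 0) 0 with hb0 | hb0
  · refine ⟨0, by simp, ?_⟩
    have h := hS 0 (by simp)
    have h2 : (fun m => b m * (0:k) ^ m) = fun m => if m = 0 then b 0 else 0 := by
      funext m; cases m with
      | zero => simp
      | succ m => simp
    rw [h2] at h
    have h3 : HasSum (fun m => if m = 0 then b 0 else 0) (b 0) := hasSum_ite_eq 0 (b 0)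
    have := h.unique h3
    rw [this, hb0]
  set B0 := ‖b 0‖ with hB0
  have hB0pos : 0 < B0 := norm_pos_iff.mpr hb0
  obtain ⟨N₀, hN₀⟩ := (Filter.eventually_atTop).mp (hb.eventually_lt_const hB0pos)
  set M₀ := max N₀ mh with hM₀def
  have hM₀ : ∀ m, M₀ < m → ‖b m‖ < B0 := fun m hm => hN₀ m (by omega)
  have hmhM₀ : mh ≤ M₀ := le_max_right _ _
  have hM₀1 : 1 ≤ M₀ := le_trans hm1 hmhM₀
  have hbdd : BddAbove (Set.range fun m => ‖b m‖) := hb.bddAbove_range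
  set ε : ℕ → ℝ := fun M => ⨆ j : ℕ, ‖b (M + 1 + j)‖ with hε
  have hbdd' : ∀ M, BddAbove (Set.range fun j => ‖b (M + 1 + j)‖) := fun M => by
    obtain ⟨C, hC⟩ := hbdd; exact ⟨C, by rintro x ⟨j, rfl⟩; exact hC ⟨M+1+j, rfl⟩⟩
  have hεle : ∀ M m, M < m → ‖b m‖ ≤ ε M := by
    intro M m hm
    have h : m = M + 1 + (m - M - 1) := by omega
    rw [h]
    exact le_ciSup (hbdd' M) _
  have hεnn : ∀ M, 0 ≤ ε M := fun M => le_trans (norm_nonneg _) (hεle M (M+1) (by omega))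
  have hεsmall : ∀ δ : ℝ, 0 < δ → ∃ M, M₀ ≤ M ∧ ε M ≤ δ := by
    intro δ hδ
    obtain ⟨N, hN⟩ := (Filter.eventually_atTop).mp (hb.eventually_lt_const hδ)
    refine ⟨max N M₀, le_max_right _ _, ?_⟩
    apply ciSup_le
    intro j
    exact (hN _ (by omega)).le
  set T : ℕ → Polynomial k := fun M => ∑ m ∈ Finset.range (M+1), C (b m) * X ^ m with hT
  have hTcoeff : ∀ M m, m ≤ M → (T M).coeff m = b m := by
    intro M m hm
    rw [hT]
    simp only [finset_sum_coeff, coeff_C_mul, coeff_X_pow]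
    rw [Finset.sum_eq_single m]
    · simp
    · intro i _ hne
      simp [Ne.symm hne]
    · intro h
      exact absurd (Finset.mem_range.mpr (by omega)) h
  have hTcoeff2 : ∀ M m, M < m → (T M).coeff m = 0 := by
    intro M m hm
    rw [hT]
    simp only [finset_sum_coeff, coeff_C_mul, coeff_X_pow]
    apply Finset.sum_eq_zero
    intro i hi
    rw [Finset.mem_range] at hi
    simp [show m ≠ i by omega]
  have hTdeg : ∀ M, (T M).natDegree ≤ M := fun M =>
    natDegree_le_iff_coeff_eq_zero.mpr fun N hN => hTcoeff2 M N hN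
  have hTne : ∀ M, mh ≤ M → T M ≠ 0 := by
    intro M hM h0
    have h1 := hTcoeff M mh hM
    rw [h0, coeff_zero] at h1
    rw [← h1, norm_zero] at hdom
    linarith
  have hT0 : ∀ M, (T M).coeff 0 = b 0 := fun M => hTcoeff M 0 (by omega)
  have hTeval : ∀ M (x : k), ‖x‖ ≤ 1 → ‖S x - (T M).eval x‖ ≤ ε M := by
    intro M x hx
    have h1 : (T M).eval x = ∑ m ∈ Finset.range (M+1), b m * x ^ m := by
      rw [hT, eval_finset_sum]; simp
    have hsum := hS x hx
    have h3 := Summable.sum_add_tsum_nat_add (f := fun m => b m * x ^ m) (M+1) hsum.summable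
    have h5 : S x - (T M).eval x = ∑' i, b (i + (M+1)) * x ^ (i + (M+1)) := by
      rw [← hsum.tsum_eq, h1, ← h3]; ring
    rw [h5]
    refine norm_tsum_le_of_forall_le_of_nonneg (hεnn M) ?_
    intro i
    rw [norm_mul]
    calc ‖b (i + (M+1))‖ * ‖x ^ (i + (M+1))‖ ≤ ε M * 1 := by
          refine mul_le_mul (hεle M _ (by omega)) ?_ (norm_nonneg _) (hεnn M)
          rw [norm_pow]; exact pow_le_one₀ (norm_nonneg _) hx
      _ = ε M := mul_one _
  have hB0lc : ∀ M, mh ≤ M → B0 ≤ ‖(T M).leadingCoeff‖ * prodO (T M) := by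
    intro M hM
    have h3 := key_coeff_zero (hTne M hM)
    rw [hT0] at h3
    rw [hB0, h3]
    have hI1 := prodI_le_one (T M)
    have hIpos : 0 < prodI (T M) := prodI_pos (by rw [hT0]; exact hb0)
    have hlcO : 0 ≤ ‖(T M).leadingCoeff‖ * prodO (T M) :=
      mul_nonneg (norm_nonneg _) (prodO_pos _).le
    nlinarith
  have hKle : ∀ M, M₀ ≤ M → Multiset.card (In (T M)) ≤ M₀ := by
    intro M hM
    by_contra hcon
    push_neg at hcon
    have h1 : Multiset.card (In (T M)) ≤ M := le_trans card_In_le (hTdeg M)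
    have h2 := key_coeff_eq (hTne M (le_trans hmhM₀ hM))
    have h4 : B0 ≤ ‖(T M).coeff (Multiset.card (In (T M)))‖ := by
      rw [h2]; exact hB0lc M (le_trans hmhM₀ hM)
    rw [hTcoeff M _ h1] at h4
    exact absurd h4 (not_le.mpr (hM₀ _ hcon))
  have hKpos : ∀ M, M₀ ≤ M → ∃ z, z ∈ In (T M) := by
    intro M hM
    by_contra hcon
    push_neg at hcon
    have hIn0 : In (T M) = 0 := Multiset.eq_zero_of_forall_notMem hcon
    have hne := hTne M (le_trans hmhM₀ hM)
    have h3 := key_coeff_zero hne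
    have h4 := key_coeff_lt hne (j := mh) (by rw [hIn0]; simp; omega)
    rw [hTcoeff M mh (le_trans hmhM₀ hM)] at h4
    rw [hT0] at h3
    have hprodI : prodI (T M) = 1 := prodI_eq_one_of_In_eq_zero hIn0
    rw [hprodI, mul_one] at h3
    rw [← h3] at h4
    linarith
  have happrox : ∀ M, M₀ ≤ M → ∀ w : k, ‖w‖ ≤ 1 → ∀ δ : ℝ, 0 < δ → δ ≤ 1 →
      ‖(T M).eval w‖ ≤ B0 * δ ^ M₀ → ∃ z, ‖z‖ ≤ 1 ∧ (T M).eval z = 0 ∧ ‖w - z‖ ≤ δ := by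
    intro M hM w hw δ hδ0 hδ1 hval
    by_contra hcon
    push_neg at hcon
    have hne := hTne M (le_trans hmhM₀ hM)
    have hzero : ∀ z ∈ In (T M), δ < ‖w - z‖ := by
      intro z hz
      obtain ⟨hz1, hz2⟩ := mem_In hz
      exact hcon z hz1 (Polynomial.mem_roots'.mp hz2).2
    have hInne : In (T M) ≠ 0 := by
      obtain ⟨z, hz⟩ := hKpos M hM
      exact fun h0 => by rw [h0] at hz; exact absurd hz (Multiset.notMem_zero z)
    have hmapne : (In (T M)).map (fun z => ‖w - z‖) ≠ 0 := by
      intro h0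
      exact hInne (Multiset.map_eq_zero.mp h0)
    have hprod : δ ^ Multiset.card (In (T M)) < ((In (T M)).map fun z => ‖w - z‖).prod := by
      have := pow_lt_prodR hδ0 hmapne (fun x hx => by
        obtain ⟨z, hz, rfl⟩ := Multiset.mem_map.mp hx
        exact hzero z hz)
      rwa [Multiset.card_map] at this
    have hKM₀ : Multiset.card (In (T M)) ≤ M₀ := hKle M hM
    have hδpow : δ ^ M₀ ≤ δ ^ Multiset.card (In (T M)) :=
      pow_le_pow_of_le_one hδ0.le hδ1 hKM₀
    have heval := key_eval hne hw
    have hgt : B0 * δ ^ M₀ < ‖(T M).eval w‖ := by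
      rw [heval]
      calc B0 * δ ^ M₀ ≤ B0 * δ ^ Multiset.card (In (T M)) := by
            exact mul_le_mul_of_nonneg_left hδpow hB0pos.le
        _ < B0 * ((In (T M)).map fun z => ‖w - z‖).prod := by
            exact mul_lt_mul_of_pos_left hprod hB0pos
        _ ≤ (‖(T M).leadingCoeff‖ * prodO (T M)) * ((In (T M)).map fun z => ‖w - z‖).prod := by
            refine mul_le_mul_of_nonneg_right (hB0lc M (le_trans hmhM₀ hM)) ?_
            refine Multiset.prod_nonneg ?_
            intro x hx
            obtain ⟨z, hz, rfl⟩ := Multiset.mem_map.mp hx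
            exact norm_nonneg _
    linarith
  -- choose the sequence of truncation levels
  have hchoice : ∀ j : ℕ, ∃ M, M₀ ≤ M ∧ ε M ≤ B0 * ((1/2 : ℝ) ^ (j+1)) ^ M₀ :=
    fun j => hεsmall _ (by positivity)
  choose Mseq hMseq1 hMseq2 using hchoice
  obtain ⟨z₀, hz₀⟩ := hKpos (Mseq 0) (hMseq1 0)
  have hstep : ∀ (j : ℕ) (x : k), ∃ y : k, (‖x‖ ≤ 1 ∧ (T (Mseq j)).eval x = 0) →
      ((‖y‖ ≤ 1 ∧ (T (Mseq (j+1))).eval y = 0) ∧ ‖x - y‖ ≤ (1/2:ℝ)^(j+1)) := by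
    intro j x
    by_cases hx : ‖x‖ ≤ 1 ∧ (T (Mseq j)).eval x = 0
    · have e1 := hTeval (Mseq j) x hx.1
      rw [hx.2, sub_zero] at e1
      have e2 := hTeval (Mseq (j+1)) x hx.1
      have h1 : ‖(T (Mseq (j+1))).eval x‖ ≤ max (ε (Mseq j)) (ε (Mseq (j+1))) := by
        have hsplit : (T (Mseq (j+1))).eval x = S x - (S x - (T (Mseq (j+1))).eval x) := by ring
        rw [hsplit]
        exact (bbdp_norm_sub_le_max _ _).trans (max_le_max e1 e2)
      have h2 : ‖(T (Mseq (j+1))).eval x‖ ≤ B0 * ((1/2:ℝ)^(j+1))^M₀ := by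
        refine h1.trans (max_le (hMseq2 j) ((hMseq2 (j+1)).trans ?_))
        refine mul_le_mul_of_nonneg_left ?_ hB0pos.le
        refine pow_le_pow_left₀ (by positivity) ?_ M₀
        exact pow_le_pow_of_le_one (by norm_num) (by norm_num) (by omega)
      obtain ⟨y, hy1, hy2, hy3⟩ := happrox (Mseq (j+1)) (hMseq1 _) x hx.1 ((1/2:ℝ)^(j+1))
        (by positivity) (pow_le_one₀ (by norm_num) (by norm_num)) h2
      exact ⟨y, fun _ => ⟨⟨hy1, hy2⟩, hy3⟩⟩
    · exact ⟨x, fun h => absurd h hx⟩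
  choose g hg using hstep
  set a : ℕ → k := fun j => Nat.rec z₀ (fun j y => g j y) j with ha
  have hastep : ∀ j, a (j+1) = g j (a j) := fun j => rfl
  have hinv : ∀ j, ‖a j‖ ≤ 1 ∧ (T (Mseq j)).eval (a j) = 0 := by
    intro j
    induction j with
    | zero =>
      obtain ⟨h1, h2⟩ := mem_In hz₀
      exact ⟨h1, (Polynomial.mem_roots'.mp h2).2⟩
    | succ j ih =>
      rw [hastep j]
      exact ((hg j (a j)) ih).1
  have hdist : ∀ j, ‖a j - a (j+1)‖ ≤ (1/2:ℝ)^(j+1) := by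
    intro j
    rw [hastep j]
    exact ((hg j (a j)) (hinv j)).2
  have hcauchy : CauchySeq a := by
    refine cauchySeq_of_le_geometric (1/2 : ℝ) 1 (by norm_num) ?_
    intro j
    rw [dist_eq_norm]
    calc ‖a j - a (j+1)‖ ≤ (1/2:ℝ)^(j+1) := hdist j
      _ ≤ 1 * (1/2:ℝ)^j := by
          rw [one_mul, pow_succ]
          nlinarith [pow_pos (show (0:ℝ) < 1/2 by norm_num) j]
  obtain ⟨z, hz⟩ := cauchySeq_tendsto_of_complete hcauchy
  have hzn : ‖z‖ ≤ 1 :=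
    le_of_tendsto hz.norm (Filter.Eventually.of_forall fun j => (hinv j).1)
  refine ⟨z, hzn, ?_⟩
  obtain ⟨Bb, hBb⟩ := hbdd
  have hBb' : ∀ m, ‖b m‖ ≤ Bb := fun m => hBb ⟨m, rfl⟩
  have hBbnn : 0 ≤ Bb := le_trans (norm_nonneg _) (hBb' 0)
  have hLip : ∀ x y : k, ‖x‖ ≤ 1 → ‖y‖ ≤ 1 → ‖S x - S y‖ ≤ Bb * ‖x - y‖ := by
    intro x y hx hy
    have hsum := (hS x hx).sub (hS y hy)
    have hfun : (fun m => b m * x ^ m - b m * y ^ m) = fun m => b m * (x ^ m - y ^ m) := by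
      funext m; ring
    rw [hfun] at hsum
    refine bbdp_norm_hasSum_le hsum (by positivity) ?_
    intro m
    rw [norm_mul]
    exact mul_le_mul (hBb' m) (bbdp_norm_pow_sub_pow hx hy m) (norm_nonneg _) hBbnn
  have hfinal : ∀ j, ‖S z‖ ≤ Bb * ‖z - a j‖ + B0 * ((1/2:ℝ)^(j+1))^M₀ := by
    intro j
    have h1 : ‖S z - S (a j)‖ ≤ Bb * ‖z - a j‖ := hLip z (a j) hzn (hinv j).1
    have h2 : ‖S (a j)‖ ≤ B0 * ((1/2:ℝ)^(j+1))^M₀ := by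
      have h := hTeval (Mseq j) (a j) (hinv j).1
      rw [(hinv j).2, sub_zero] at h
      exact h.trans (hMseq2 j)
    calc ‖S z‖ = ‖(S z - S (a j)) + S (a j)‖ := by rw [sub_add_cancel]
      _ ≤ ‖S z - S (a j)‖ + ‖S (a j)‖ := norm_add_le _ _
      _ ≤ _ := add_le_add h1 h2
  have hrhs : Tendsto (fun j => Bb * ‖z - a j‖ + B0 * ((1/2:ℝ)^(j+1))^M₀) atTop (nhds 0) := by
    have t0 : Tendsto (fun j => z - a j) atTop (nhds 0) := by
      have h := hz.const_sub z
      simpa using h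
    have t1 : Tendsto (fun j => Bb * ‖z - a j‖) atTop (nhds 0) := by
      have h := t0.norm.const_mul Bb
      simpa using h
    have t2 : Tendsto (fun j : ℕ => B0 * ((1/2:ℝ)^(j+1))^M₀) atTop (nhds 0) := by
      have hr : |((1/2:ℝ)^M₀)| < 1 := by
        rw [abs_of_nonneg (by positivity)]
        exact pow_lt_one₀ (by norm_num) (by norm_num) (by omega)
      have hg : Tendsto (fun j : ℕ => ((1/2:ℝ)^M₀)^j) atTop (nhds 0) :=
        tendsto_pow_atTop_nhds_zero_of_abs_lt_one hr
      have hg2 : Tendsto (fun j : ℕ => ((1/2:ℝ)^M₀)^(j+1)) atTop (nhds 0) := by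
        exact hg.comp (tendsto_add_atTop_nat 1)
      have hfun : (fun j : ℕ => B0 * ((1/2:ℝ)^(j+1))^M₀) = fun j : ℕ => B0 * ((1/2:ℝ)^M₀)^(j+1) := by
        funext j; rw [← pow_mul, ← pow_mul, Nat.mul_comm]
      rw [hfun]
      simpa using hg2.const_mul B0
    simpa using t1.add t2
  have hle : ‖S z‖ ≤ 0 := ge_of_tendsto hrhs (Filter.Eventually.of_forall hfinal)
  have := le_antisymm hle (norm_nonneg _)
  rwa [norm_eq_zero] at this

lemma u_zero_eq {u : k → k} {uc : ℕ → k}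
    (huc : ∀ a : k, ‖a‖ < 1 → HasSum (fun m => uc m * a ^ m) (u a)) : u 0 = uc 0 := by
  have h := huc 0 (by simp)
  have h2 : (fun m => uc m * (0:k) ^ m) = fun m => if m = 0 then uc 0 else 0 := by
    funext m; cases m with
    | zero => simp
    | succ m => simp
  rw [h2] at h
  exact h.unique (hasSum_ite_eq 0 (uc 0))

lemma coeff_decay {uc : ℕ → k} {u : k → k}
    (huc : ∀ a : k, ‖a‖ < 1 → HasSum (fun m => uc m * a ^ m) (u a))
    {r : ℝ} (hr0 : 0 < r) (hr1 : r < 1) :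
    Tendsto (fun m => ‖uc m‖ * r ^ m) atTop (nhds 0) := by
  obtain ⟨x, hx1, hx2⟩ := bbdp_exists_norm_btwn k hr0 hr1
  have h := ((huc x hx2).summable.tendsto_atTop_zero).norm
  rw [norm_zero] at h
  have h2 : Tendsto (fun m => ‖uc m‖ * ‖x‖ ^ m) atTop (nhds 0) := by
    refine h.congr fun m => ?_
    rw [norm_mul, norm_pow]
  refine squeeze_zero (fun m => by positivity) (fun m => ?_) h2
  refine mul_le_mul_of_nonneg_left (pow_le_pow_left₀ hr0.le hx1.le m) (norm_nonneg _)

lemma strassmann_bound {u : k → k} {uc : ℕ → k}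
    (huc : ∀ a : k, ‖a‖ < 1 → HasSum (fun m => uc m * a ^ m) (u a))
    (hne : ∀ a : k, ‖a‖ < 1 → u a ≠ 0) :
    ∀ ρ : k, ‖ρ‖ < 1 → ∀ m, 1 ≤ m → ‖uc m‖ * ‖ρ‖ ^ m ≤ ‖uc 0‖ := by
  intro ρ hρ m hm
  by_contra hcon
  push_neg at hcon
  have hρ0 : ρ ≠ 0 := by
    intro h
    rw [h, norm_zero, zero_pow (by omega), mul_zero] at hcon
    exact absurd hcon (not_lt.mpr (norm_nonneg _))
  have hρpos : 0 < ‖ρ‖ := norm_pos_iff.mpr hρ0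
  set b : ℕ → k := fun m' => uc m' * ρ ^ m' with hb
  have hdecay : Tendsto (fun m' => ‖b m'‖) atTop (nhds 0) := by
    have h := coeff_decay huc hρpos hρ
    refine h.congr fun m' => ?_
    rw [hb, norm_mul, norm_pow]
  have hdom : ‖b 0‖ < ‖b m‖ := by
    rw [hb]
    simp only [pow_zero, mul_one, norm_mul, norm_pow]
    exact hcon
  have hS : ∀ x : k, ‖x‖ ≤ 1 → HasSum (fun m' => b m' * x ^ m') (u (ρ * x)) := by
    intro x hx
    have hρx : ‖ρ * x‖ < 1 := by
      rw [norm_mul]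
      calc ‖ρ‖ * ‖x‖ ≤ ‖ρ‖ * 1 := mul_le_mul_of_nonneg_left hx hρpos.le
        _ = ‖ρ‖ := mul_one _
        _ < 1 := hρ
    have h := huc (ρ * x) hρx
    refine h.congr_fun fun m' => ?_
    rw [hb, mul_pow]; ring
  obtain ⟨z, hz1, hz2⟩ := BBDP.strassmann_zero hdecay hm hdom hS
  have hρz : ‖ρ * z‖ < 1 := by
    rw [norm_mul]
    calc ‖ρ‖ * ‖z‖ ≤ ‖ρ‖ * 1 := mul_le_mul_of_nonneg_left hz1 hρpos.le
      _ = ‖ρ‖ := mul_one _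
      _ < 1 := hρ
  exact hne (ρ * z) hρz hz2

lemma unit_norm_constant {u : k → k} {uc : ℕ → k}
    (huc : ∀ a : k, ‖a‖ < 1 → HasSum (fun m => uc m * a ^ m) (u a))
    (hne : ∀ a : k, ‖a‖ < 1 → u a ≠ 0) :
    ∀ a : k, ‖a‖ < 1 → ‖u a‖ = ‖u 0‖ := by
  intro a ha
  rcases eq_or_ne a 0 with rfl | ha0
  · rfl
  have hapos : 0 < ‖a‖ := norm_pos_iff.mpr ha0
  have huc0 : uc 0 ≠ 0 := by
    rw [← u_zero_eq huc]
    exact hne 0 (by simp)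
  have huc0pos : 0 < ‖uc 0‖ := norm_pos_iff.mpr huc0
  obtain ⟨x, hx1, hx2⟩ := bbdp_exists_norm_btwn k hapos ha
  have hxpos : 0 < ‖x‖ := lt_trans hapos hx1
  set q : ℝ := ‖a‖ / ‖x‖ with hq
  have hq0 : 0 < q := div_pos hapos hxpos
  have hq1 : q < 1 := (div_lt_one hxpos).mpr hx1
  have hterm : ∀ m, 1 ≤ m → ‖uc m * a ^ m‖ ≤ ‖uc 0‖ * q := by
    intro m hm
    rw [norm_mul, norm_pow]
    have h1 : ‖a‖ ^ m = ‖x‖ ^ m * q ^ m := by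
      rw [← mul_pow, hq]
      congr 1
      field_simp
    rw [h1, ← mul_assoc]
    calc ‖uc m‖ * ‖x‖ ^ m * q ^ m ≤ ‖uc 0‖ * q ^ m := by
          refine mul_le_mul_of_nonneg_right ?_ (by positivity)
          exact strassmann_bound huc hne x hx2 m hm
      _ ≤ ‖uc 0‖ * q := by
          refine mul_le_mul_of_nonneg_left ?_ huc0pos.le
          calc q ^ m ≤ q ^ 1 := pow_le_pow_of_le_one hq0.le hq1.le hm
            _ = q := pow_one q
  have h := huc a ha
  have hsplit : u a = uc 0 + ∑' m, uc (m+1) * a ^ (m+1) := by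
    rw [← h.tsum_eq, Summable.tsum_eq_zero_add h.summable]
    simp
  have hR : ‖∑' m, uc (m+1) * a ^ (m+1)‖ ≤ ‖uc 0‖ * q := by
    refine norm_tsum_le_of_forall_le_of_nonneg (by positivity) fun m => ?_
    exact hterm (m+1) (by omega)
  have hRlt : ‖∑' m, uc (m+1) * a ^ (m+1)‖ < ‖uc 0‖ := by
    calc ‖∑' m, uc (m+1) * a ^ (m+1)‖ ≤ ‖uc 0‖ * q := hR
      _ < ‖uc 0‖ * 1 := mul_lt_mul_of_pos_left hq1 huc0pos
      _ = ‖uc 0‖ := mul_one _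
  rw [hsplit, bbdp_norm_add_eq_left hRlt, u_zero_eq huc]


end BBDP


/-- A finite surjective analytic self-map of the open unit disk `O(0,1)` over `k`. -/
structure AnalyticDiskMap (k : Type*) [NontriviallyNormedField k] where
  toFun : k → k
  coeff : ℕ → k
  hasSum_eval : ∀ a : k, ‖a‖ < 1 → HasSum (fun n => coeff n * a ^ n) (toFun a)
  maps_disk : ∀ a : k, ‖a‖ < 1 → ‖toFun a‖ < 1
  map_zero : toFun 0 = 0
  surj : ∀ b : k, ‖b‖ < 1 → ∃ a : k, ‖a‖ < 1 ∧ toFun a = b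
  finite_fibers : ∀ b : k, ‖b‖ < 1 → Set.Finite {a : k | ‖a‖ < 1 ∧ toFun a = b}

theorem backward_branching_determines_profile
    (k : Type*) [NontriviallyNormedField k] [IsUltrametricDist k]
    [IsAlgClosed k] [CompleteSpace k]
    (f : AnalyticDiskMap k) (n : ℕ) (β : Fin (n + 1) → k)
    (hβ0 : β 0 = 0) (hβ : ∀ i, ‖β i‖ < 1)
    -- `f` is étale, so all the zeros are simple:
    (hinj : Function.Injective β)
    (hzeros : ∀ a : k, ‖a‖ < 1 → (f.toFun a = 0 ↔ ∃ i, a = β i))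
    (hfact : ∃ u : k → k,
      (∃ uc : ℕ → k, ∀ a : k, ‖a‖ < 1 → HasSum (fun m => uc m * a ^ m) (u a)) ∧
      (∀ a : k, ‖a‖ < 1 → u a ≠ 0) ∧
      (∀ a : k, ‖a‖ < 1 → f.toFun a = (∏ i, (a - β i)) * u a))
    -- the profile function `f₀` of `f`:
    (f₀ : ℝ → ℝ) (hcont : ContinuousOn f₀ (Set.Ioi 0))
    (hcompat : ∀ a : k, 0 < ‖a‖ → ‖a‖ < 1 → (∀ i, ‖a‖ ≠ ‖β i‖) →
      f₀ (-Real.log ‖a‖) = -Real.log ‖f.toFun a‖)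
    (t : ℝ) (ht : 0 < t)
    -- `f₀(s) = d·s + α` on the linearity piece containing `t` (larger-radii side):
    (d α : ℝ)
    (hpiece : ∃ ε > 0, ∀ s : ℝ, t - ε < s → s ≤ t → f₀ s = d * s + α)
    -- `f₀(s) = s + α_max` near `s = ∞` (slope `1`):
    (αmax : ℝ)
    (hbig : ∃ M : ℝ, 0 < M ∧ ∀ s : ℝ, M ≤ s → f₀ s = s + αmax) :
    -- `B(t)` = zeros in the closed ball of radius `exp(-t)`; then the slope is
    -- `card B(t)` and the intercept drops from `α_max` by the sum of the valuations
    -- of the nonzero merged zeros: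
    d = ((Finset.univ.filter fun i => ‖β i‖ ≤ Real.exp (-t)).card : ℝ) ∧
    αmax = ∑ i ∈ Finset.univ.filter fun i => 0 < ‖β i‖, (-Real.log ‖β i‖) ∧
    α = αmax -
      ∑ i ∈ Finset.univ.filter fun i => 0 < ‖β i‖ ∧ ‖β i‖ ≤ Real.exp (-t),
        (-Real.log ‖β i‖) := by
  obtain ⟨u, ⟨uc, huc⟩, hne, hprodu⟩ := hfact
  have hconst := BBDP.unit_norm_constant huc hne
  have hu0pos : 0 < ‖u 0‖ := norm_pos_iff.mpr (hne 0 (by simp))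
  have hfa : ∀ a : k, ‖a‖ < 1 → ‖f.toFun a‖ = (∏ i, ‖a - β i‖) * ‖u 0‖ := by
    intro a ha
    rw [hprodu a ha, norm_mul, norm_prod, hconst a ha]
  -- the largest zero radius
  have huniv : (Finset.univ : Finset (Fin (n+1))).Nonempty := Finset.univ_nonempty
  set R₀ : ℝ := Finset.univ.sup' huniv (fun i => ‖β i‖) with hR₀
  have hR₀lt : R₀ < 1 := by
    rw [hR₀, Finset.sup'_lt_iff]; exact fun i _ => hβ i
  have hR₀ge : ∀ i, ‖β i‖ ≤ R₀ := fun i => Finset.le_sup' (fun j => ‖β j‖) (Finset.mem_univ i)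
  -- ‖u 0‖ ≤ 1
  have hcle : ‖u 0‖ ≤ 1 := by
    by_contra hcon
    push_neg at hcon
    set δ : ℝ := ‖u 0‖ ^ (-(1 / ((n:ℝ)+1))) with hδ
    have hδ0 : 0 < δ := Real.rpow_pos_of_pos hu0pos _
    have hδ1 : δ < 1 := by
      refine Real.rpow_lt_one_of_one_lt_of_neg hcon ?_
      rw [neg_lt, neg_zero]
      positivity
    have hδpow : δ ^ (n+1) * ‖u 0‖ = 1 := by
      rw [hδ, ← Real.rpow_natCast (‖u 0‖ ^ (-(1 / ((n:ℝ)+1)))) (n+1),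
        ← Real.rpow_mul hu0pos.le]
      have : (-(1 / ((n:ℝ)+1))) * ((n+1 : ℕ) : ℝ) = -1 := by
        push_cast; field_simp
      rw [this, Real.rpow_neg_one]
      field_simp
    have hmaxpos : 0 < max R₀ δ := lt_of_lt_of_le hδ0 (le_max_right _ _)
    have hmaxlt : max R₀ δ < 1 := max_lt hR₀lt hδ1
    obtain ⟨a, ha1, ha2⟩ := bbdp_exists_norm_btwn k hmaxpos hmaxlt
    have haR₀ : R₀ < ‖a‖ := lt_of_le_of_lt (le_max_left _ _) ha1
    have haδ : δ < ‖a‖ := lt_of_le_of_lt (le_max_right _ _) ha1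
    have hprodmax : ∀ i, ‖a - β i‖ = ‖a‖ := by
      intro i
      have hne' : ‖a‖ ≠ ‖β i‖ := fun h => absurd (h ▸ lt_of_le_of_lt (hR₀ge i) haR₀) (lt_irrefl _)
      rw [bbdp_norm_sub_eq_max hne', max_eq_left (le_of_lt (lt_of_le_of_lt (hR₀ge i) haR₀))]
    have hfval : ‖f.toFun a‖ = ‖a‖ ^ (n+1) * ‖u 0‖ := by
      rw [hfa a ha2]
      congr 1
      rw [Finset.prod_congr rfl fun i _ => hprodmax i, Finset.prod_const,
        Finset.card_univ, Fintype.card_fin]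
    have h1 : (1:ℝ) < ‖f.toFun a‖ := by
      rw [hfval, ← hδpow]
      refine mul_lt_mul_of_pos_right ?_ hu0pos
      exact pow_lt_pow_left₀ haδ hδ0.le (by omega)
    exact absurd (f.maps_disk a ha2) (not_lt.mpr h1.le)
  -- 1 ≤ ‖u 0‖
  have hcge : 1 ≤ ‖u 0‖ := by
    by_contra hcon
    push_neg at hcon
    obtain ⟨b, hb1, hb2⟩ := bbdp_exists_norm_btwn k hu0pos hcon
    obtain ⟨a, ha, hab⟩ := f.surj b hb2
    have h1 : ‖f.toFun a‖ ≤ ‖u 0‖ := by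
      rw [hfa a ha]
      calc (∏ i, ‖a - β i‖) * ‖u 0‖ ≤ 1 * ‖u 0‖ := by
            refine mul_le_mul_of_nonneg_right ?_ hu0pos.le
            refine Finset.prod_le_one (fun i _ => norm_nonneg _) fun i _ => ?_
            refine (bbdp_norm_sub_le_max a (β i)).trans (max_le ha.le (hβ i).le)
        _ = ‖u 0‖ := one_mul _
    rw [hab] at h1
    linarith
  have hc1 : ‖u 0‖ = 1 := le_antisymm hcle hcge
  -- the profile evaluation formula at generic points
  have heval : ∀ a : k, 0 < ‖a‖ → ‖a‖ < 1 → (∀ i, ‖a‖ ≠ ‖β i‖) →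
      f₀ (-Real.log ‖a‖) = ∑ i, (if ‖β i‖ < ‖a‖ then -Real.log ‖a‖ else -Real.log ‖β i‖) := by
    intro a h0 h1 hne'
    rw [hcompat a h0 h1 hne']
    have hnorm : ‖f.toFun a‖ = ∏ i, max ‖a‖ ‖β i‖ := by
      rw [hfa a h1, hc1, mul_one]
      exact Finset.prod_congr rfl fun i _ => bbdp_norm_sub_eq_max (hne' i)
    rw [hnorm, Real.log_prod]
    · rw [← Finset.sum_neg_distrib]
      refine Finset.sum_congr rfl fun i _ => ?_
      rcases lt_or_gt_of_ne (hne' i).symm with h | h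
      · rw [if_pos h, max_eq_left h.le]
      · rw [if_neg (not_lt.mpr h.le), max_eq_right h.le]
    · intro i _
      have : 0 < max ‖a‖ ‖β i‖ := lt_of_lt_of_le h0 (le_max_left _ _)
      exact this.ne'
  -- select two generic points just below t
  obtain ⟨ε, hε, hp⟩ := hpiece
  set W : Finset ℝ := insert (max (t - ε/2) (t/2))
     (((Finset.univ : Finset (Fin (n+1))).image fun i => -Real.log ‖β i‖).filter (fun v => v < t)) with hW
  have hWne : W.Nonempty := Finset.insert_nonempty _ _
  set lb := W.max' hWne with hlb
  have hlbt : lb < t := by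
    rw [hlb, Finset.max'_lt_iff]
    intro y hy
    rw [hW, Finset.mem_insert] at hy
    rcases hy with rfl | hy
    · exact max_lt (by linarith) (by linarith)
    · exact (Finset.mem_filter.mp hy).2
  have hlbmem : max (t - ε/2) (t/2) ∈ W := by rw [hW]; exact Finset.mem_insert_self _ _
  have hlb1 : t - ε/2 ≤ lb := le_trans (le_max_left _ _) (Finset.le_max' _ _ hlbmem)
  have hlb2 : t/2 ≤ lb := le_trans (le_max_right _ _) (Finset.le_max' _ _ hlbmem)
  have hlb0 : 0 < lb := lt_of_lt_of_le (by linarith) hlb2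
  have hlbv : ∀ i : Fin (n+1), -Real.log ‖β i‖ < t → -Real.log ‖β i‖ ≤ lb := by
    intro i hi
    refine Finset.le_max' _ _ ?_
    rw [hW, Finset.mem_insert]
    right
    rw [Finset.mem_filter]
    exact ⟨Finset.mem_image_of_mem _ (Finset.mem_univ i), hi⟩
  have hexplt : Real.exp (-t) < Real.exp (-lb) := Real.exp_lt_exp.mpr (by linarith)
  have hpoint : ∀ a : k, Real.exp (-t) < ‖a‖ → ‖a‖ < Real.exp (-lb) →
      d * (-Real.log ‖a‖) + α =
        ((Finset.univ.filter fun i : Fin (n+1) => ‖β i‖ ≤ Real.exp (-t)).card : ℝ)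
          * (-Real.log ‖a‖) +
        ∑ i ∈ Finset.univ.filter (fun i : Fin (n+1) => ¬ ‖β i‖ ≤ Real.exp (-t)),
          (-Real.log ‖β i‖) := by
    intro a ha1 ha2
    have h0 : 0 < ‖a‖ := lt_trans (Real.exp_pos _) ha1
    have hexp1 : Real.exp (-lb) < 1 := by
      rw [Real.exp_lt_one_iff]
      linarith
    have h1 : ‖a‖ < 1 := lt_trans ha2 hexp1
    set s := -Real.log ‖a‖ with hs
    have hsa : ‖a‖ = Real.exp (-s) := by rw [hs, neg_neg, Real.exp_log h0]
    have hslb : lb < s := by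
      have h := Real.log_lt_log h0 ha2
      rw [Real.log_exp] at h
      rw [hs]; linarith
    have hst : s < t := by
      have h := Real.log_lt_log (Real.exp_pos _) ha1
      rw [Real.log_exp] at h
      rw [hs]; linarith
    have hbig_or : ∀ i, β i ≠ 0 → (‖a‖ < ‖β i‖ ∨ ‖β i‖ ≤ Real.exp (-t)) := by
      intro i hz
      have hbpos : 0 < ‖β i‖ := norm_pos_iff.mpr hz
      rcases lt_or_ge (-Real.log ‖β i‖) t with hv | hv
      · left
        have hvlb := hlbv i hv
        have h2 : Real.exp (-s) < Real.exp (-(-Real.log ‖β i‖)) :=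
          Real.exp_lt_exp.mpr (by linarith)
        rwa [← hsa, neg_neg, Real.exp_log hbpos] at h2
      · right
        have h2 : Real.exp (-(-Real.log ‖β i‖)) ≤ Real.exp (-t) :=
          Real.exp_le_exp.mpr (by linarith)
        rwa [neg_neg, Real.exp_log hbpos] at h2
    have hbne : ∀ i, ‖a‖ ≠ ‖β i‖ := by
      intro i
      rcases eq_or_ne (β i) 0 with hz | hz
      · rw [hz, norm_zero]; exact h0.ne'
      · rcases hbig_or i hz with h | h
        · exact h.ne
        · exact (lt_of_le_of_lt h ha1).ne'
    have hiff : ∀ i, (‖β i‖ < ‖a‖) ↔ (‖β i‖ ≤ Real.exp (-t)) := by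
      intro i
      constructor
      · intro h
        rcases eq_or_ne (β i) 0 with hz | hz
        · rw [hz, norm_zero]; exact (Real.exp_pos _).le
        · rcases hbig_or i hz with h2 | h2
          · linarith
          · exact h2
      · intro h; exact lt_of_le_of_lt h ha1
    have he := heval a h0 h1 hbne
    rw [← hs] at he
    have he2 : f₀ s = ∑ i, (if ‖β i‖ ≤ Real.exp (-t) then s else -Real.log ‖β i‖) := by
      rw [he]
      exact Finset.sum_congr rfl fun i _ => by rw [if_congr (hiff i) rfl rfl]
    have he3 : f₀ s = ((Finset.univ.filter fun i : Fin (n+1) => ‖β i‖ ≤ Real.exp (-t)).card : ℝ) * s +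
        ∑ i ∈ Finset.univ.filter (fun i : Fin (n+1) => ¬ ‖β i‖ ≤ Real.exp (-t)),
          (-Real.log ‖β i‖) := by
      rw [he2, Finset.sum_ite, Finset.sum_const, nsmul_eq_mul]
    have he4 : f₀ s = d * s + α := hp s (by linarith) hst.le
    rw [he4] at he3
    exact he3
  obtain ⟨a₁, ha₁1, ha₁2⟩ := bbdp_exists_norm_btwn k (Real.exp_pos (-t)) hexplt
  obtain ⟨a₂, ha₂1, ha₂2⟩ := bbdp_exists_norm_btwn k (Real.exp_pos (-t)) ha₁1
  have e1 := hpoint a₁ ha₁1 ha₁2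
  have e2 := hpoint a₂ ha₂1 (lt_trans ha₂2 ha₁2)
  set s₁ := -Real.log ‖a₁‖ with hs₁
  set s₂ := -Real.log ‖a₂‖ with hs₂
  have hs12 : s₁ ≠ s₂ := by
    have h := Real.log_lt_log (lt_trans (Real.exp_pos _) ha₂1) ha₂2
    rw [hs₁, hs₂]
    intro hcontra
    rw [neg_inj] at hcontra
    linarith
  set Kc : ℝ := ((Finset.univ.filter fun i : Fin (n+1) => ‖β i‖ ≤ Real.exp (-t)).card : ℝ) with hKc
  set A : ℝ := ∑ i ∈ Finset.univ.filter (fun i : Fin (n+1) => ¬ ‖β i‖ ≤ Real.exp (-t)),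
      (-Real.log ‖β i‖) with hA
  have hdK : d = Kc := by
    have h3 : d * (s₁ - s₂) = Kc * (s₁ - s₂) := by
      have h4 : d * s₁ - d * s₂ = Kc * s₁ - Kc * s₂ := by linarith
      have h5 := mul_sub d s₁ s₂
      have h6 := mul_sub Kc s₁ s₂
      linarith
    exact mul_right_cancel₀ (sub_ne_zero.mpr hs12) h3
  have hαA : α = A := by
    rw [hdK] at e1
    linarith
  -- the large point
  obtain ⟨M, hM0, hMs⟩ := hbig
  set W2 : Finset ℝ := insert M ((Finset.univ : Finset (Fin (n+1))).image fun i => -Real.log ‖β i‖) with hW2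
  have hW2ne : W2.Nonempty := Finset.insert_nonempty _ _
  set ub := W2.max' hW2ne with hub
  have hubM : M ≤ ub := Finset.le_max' _ _ (by rw [hW2]; exact Finset.mem_insert_self _ _)
  have hubv : ∀ i : Fin (n+1), -Real.log ‖β i‖ ≤ ub := fun i => Finset.le_max' _ _
    (by rw [hW2]; exact Finset.mem_insert_of_mem (Finset.mem_image_of_mem _ (Finset.mem_univ i)))
  have hub0 : 0 < ub := lt_of_lt_of_le hM0 hubM
  have hhalf : 0 < Real.exp (-ub)/2 := by positivity
  obtain ⟨a₃, ha₃1, ha₃2⟩ := bbdp_exists_norm_btwn k hhalf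
    (by linarith [Real.exp_pos (-ub)] : Real.exp (-ub)/2 < Real.exp (-ub))
  have h30 : 0 < ‖a₃‖ := lt_trans hhalf ha₃1
  have hexpub1 : Real.exp (-ub) < 1 := by rw [Real.exp_lt_one_iff]; linarith
  have h31 : ‖a₃‖ < 1 := lt_trans ha₃2 hexpub1
  set s₃ := -Real.log ‖a₃‖ with hs₃
  have hs₃M : M ≤ s₃ := by
    have h := Real.log_lt_log h30 ha₃2
    rw [Real.log_exp] at h
    rw [hs₃]; linarith
  have h3lt : ∀ i, β i ≠ 0 → ‖a₃‖ < ‖β i‖ := by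
    intro i hz
    have hbpos : 0 < ‖β i‖ := norm_pos_iff.mpr hz
    have h2 : Real.exp (-ub) ≤ Real.exp (-(-Real.log ‖β i‖)) :=
      Real.exp_le_exp.mpr (by linarith [hubv i])
    rw [neg_neg, Real.exp_log hbpos] at h2
    exact lt_of_lt_of_le ha₃2 h2
  have h3ne : ∀ i, ‖a₃‖ ≠ ‖β i‖ := by
    intro i
    rcases eq_or_ne (β i) 0 with hz | hz
    · rw [hz, norm_zero]; exact h30.ne'
    · exact (h3lt i hz).ne
  have he := heval a₃ h30 h31 h3ne
  rw [← hs₃] at he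
  have he2 : f₀ s₃ = ∑ i, (if 0 < ‖β i‖ then -Real.log ‖β i‖ else s₃) := by
    rw [he]
    refine Finset.sum_congr rfl fun i _ => ?_
    rcases eq_or_ne (β i) 0 with hz | hz
    · rw [hz, norm_zero, if_pos h30, if_neg (lt_irrefl 0)]
    · rw [if_neg (not_lt.mpr (h3lt i hz).le), if_pos (norm_pos_iff.mpr hz)]
  have hcard1 : (Finset.univ.filter fun i : Fin (n+1) => ¬ 0 < ‖β i‖).card = 1 := by
    have hsing : (Finset.univ.filter fun i : Fin (n+1) => ¬ 0 < ‖β i‖) = {0} := by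
      ext i
      simp only [Finset.mem_filter, Finset.mem_univ, true_and, Finset.mem_singleton]
      constructor
      · intro h
        have h2 : ‖β i‖ = 0 := le_antisymm (not_lt.mp h) (norm_nonneg _)
        have h3 : β i = 0 := norm_eq_zero.mp h2
        exact hinj (by rw [h3, hβ0])
      · intro h; rw [h, hβ0, norm_zero]; exact lt_irrefl 0
    rw [hsing, Finset.card_singleton]
  have he3 : f₀ s₃ = (∑ i ∈ Finset.univ.filter fun i : Fin (n+1) => 0 < ‖β i‖,
      (-Real.log ‖β i‖)) + s₃ := by
    rw [he2, Finset.sum_ite, Finset.sum_const, hcard1, one_smul]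
  have he4 := hMs s₃ hs₃M
  rw [he4] at he3
  have hαmax : αmax = ∑ i ∈ Finset.univ.filter fun i : Fin (n+1) => 0 < ‖β i‖,
      (-Real.log ‖β i‖) := by linarith
  -- split the sum
  have hsplitsum : (∑ i ∈ Finset.univ.filter fun i : Fin (n+1) => 0 < ‖β i‖, (-Real.log ‖β i‖)) =
      (∑ i ∈ Finset.univ.filter (fun i : Fin (n+1) => 0 < ‖β i‖ ∧ ‖β i‖ ≤ Real.exp (-t)),
        (-Real.log ‖β i‖)) + A := by
    rw [hA]
    have h1 := Finset.sum_filter_add_sum_filter_not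
      (Finset.univ.filter fun i : Fin (n+1) => 0 < ‖β i‖)
      (fun i => ‖β i‖ ≤ Real.exp (-t)) (fun i => -Real.log ‖β i‖)
    rw [Finset.filter_filter, Finset.filter_filter] at h1
    have h2 : (Finset.univ.filter fun i : Fin (n+1) => 0 < ‖β i‖ ∧ ¬ ‖β i‖ ≤ Real.exp (-t)) =
        (Finset.univ.filter fun i : Fin (n+1) => ¬ ‖β i‖ ≤ Real.exp (-t)) := by
      refine Finset.filter_congr fun i _ => ?_
      constructor
      · exact fun h => h.2
      · intro h
        exact ⟨lt_of_lt_of_le (Real.exp_pos (-t)) (not_le.mp h).le, h⟩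
    rw [h2] at h1
    linarith
  exact ⟨hdK, hαmax, by linarith⟩
end
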